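/- arXiv:1401.0132 — 10 statements merged into one kernel-verified Lean document; each statement's English description precedes it below -/
import Mathlib

section
/- If X₁ ≤_hr X₂ and Y₂ ≤_hr Y₁, and γ₁(u) ≤ γ₂(u) and ω₁(u) = ω₂(u) for all u ≥ 0, then the series system V₂^s = min{X₁, X₂⊛Y₂, X₃, ..., Xₙ} is smaller in the usual stochastic order than V₁^s = min{X₁⊛Y₁, X₂, X₃, ..., Xₙ}. -/
open MeasureTheory Set Filter Topology

lemma aux_deriv_nonneg {ψ : ℝ → ℝ} {a d : ℝ} (h : HasDerivAt ψ d a) (h0 : ψ a = 0)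
    (hge : ∀ v, a < v → 0 ≤ ψ v) : 0 ≤ d := by
  have hs := hasDerivAt_iff_tendsto_slope.mp h
  have hs' : Filter.Tendsto (slope ψ a) (𝓝[>] a) (𝓝 d) :=
    hs.mono_left (nhdsWithin_mono a fun x hx => ne_of_gt hx)
  refine ge_of_tendsto hs' ?_
  filter_upwards [self_mem_nhdsWithin] with x hx
  have hx' : a < x := hx
  have : 0 ≤ (ψ x - ψ a) / (x - a) :=
    div_nonneg (by rw [h0]; simpa using hge x hx') (by linarith)
  simpa [slope_def_field, div_eq_mul_inv] using this

theorem model_II_series_st_hr_case_i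
    (SX1 SX2 SY1 SY2 SH fX1 fX2 : ℝ → ℝ) (γ1 γ2 ω1 ω2 : ℝ → ℝ)
    -- densities
    (hd1 : ∀ u, HasDerivAt SX1 (-(fX1 u)) u) (hd2 : ∀ u, HasDerivAt SX2 (-(fX2 u)) u)
    (hf1_nonneg : ∀ u, 0 ≤ fX1 u) (hf2_nonneg : ∀ u, 0 ≤ fX2 u)
    (hf1_cont : Continuous fX1) (hf2_cont : Continuous fX2)
    -- survival functions of the nonnegative, absolutely continuous lifetimes
    (hSX1_pos : ∀ u ≥ 0, 0 < SX1 u) (hSX2_pos : ∀ u ≥ 0, 0 < SX2 u)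
    (hSY1_anti : Antitone SY1) (hSY2_anti : Antitone SY2)
    (hSY1_pos : ∀ u ≥ 0, 0 < SY1 u) (hSY2_pos : ∀ u ≥ 0, 0 < SY2 u)
    (hSY1_zero : SY1 0 = 1) (hSY2_zero : SY2 0 = 1)
    (hSH_nonneg : ∀ u, 0 ≤ SH u)
    -- model functions: increasing, 0 ≤ γᵢ(u) ≤ u and 0 ≤ ωᵢ(u) ≤ u
    (hγ1_mono : MonotoneOn γ1 (Set.Ici 0)) (hγ2_mono : MonotoneOn γ2 (Set.Ici 0))
    (hω1_mono : MonotoneOn ω1 (Set.Ici 0)) (hω2_mono : MonotoneOn ω2 (Set.Ici 0))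
    (hγ1_bd : ∀ u ≥ 0, 0 ≤ γ1 u ∧ γ1 u ≤ u) (hγ2_bd : ∀ u ≥ 0, 0 ≤ γ2 u ∧ γ2 u ≤ u)
    (hω1_bd : ∀ u ≥ 0, 0 ≤ ω1 u ∧ ω1 u ≤ u) (hω2_bd : ∀ u ≥ 0, 0 ≤ ω2 u ∧ ω2 u ≤ u)
    -- X₁ ≤_hr X₂ : F̄_{X₂}/F̄_{X₁} increasing
    (hhrX : ∀ s t : ℝ, s ≤ t → SX2 s * SX1 t ≤ SX2 t * SX1 s)
    -- Y₂ ≤_hr Y₁ : F̄_{Y₁}/F̄_{Y₂} increasing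
    (hhrY : ∀ s t : ℝ, s ≤ t → SY1 s * SY2 t ≤ SY1 t * SY2 s)
    -- condition (i): γ₁ ≤ γ₂ and ω₁ = ω₂
    (hγle : ∀ u ≥ 0, γ1 u ≤ γ2 u) (hωeq : ∀ u ≥ 0, ω1 u = ω2 u) :
    -- conclusion: V₂ˢ ≤_st V₁ˢ
    ∀ t ≥ 0,
      SX1 t * (SX2 t + ∫ u in (0:ℝ)..t,
          (SY2 (t - (u - ω2 u)) / SY2 (ω2 u)) * SY2 (γ2 u) * fX2 u) * SH t ≤
      (SX1 t + ∫ u in (0:ℝ)..t,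
          (SY1 (t - (u - ω1 u)) / SY1 (ω1 u)) * SY1 (γ1 u) * fX1 u) * SX2 t * SH t := by
  intro t ht
  -- hazard-rate pointwise inequality: fX2 u * SX1 u ≤ fX1 u * SX2 u
  have hA : ∀ u : ℝ, fX2 u * SX1 u ≤ fX1 u * SX2 u := by
    intro u
    have hder : HasDerivAt (fun v => SX2 v * SX1 u - SX2 u * SX1 v)
        ((-(fX2 u)) * SX1 u - SX2 u * (-(fX1 u))) u :=
      ((hd2 u).mul_const (SX1 u)).sub ((hd1 u).const_mul (SX2 u))
    have h0 : SX2 u * SX1 u - SX2 u * SX1 u = 0 := by ring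
    have := aux_deriv_nonneg hder h0 (fun v hv => by
      have := hhrX u v hv.le; linarith)
    linarith
  -- comparison of the Y-factors
  set g1 : ℝ → ℝ := fun u => (SY1 (t - (u - ω1 u)) / SY1 (ω1 u)) * SY1 (γ1 u) with hg1
  set g2 : ℝ → ℝ := fun u => (SY2 (t - (u - ω2 u)) / SY2 (ω2 u)) * SY2 (γ2 u) with hg2
  have hfacts : ∀ u ∈ Icc (0:ℝ) t, 0 ≤ g2 u ∧ g2 u ≤ g1 u := by
    intro u hu
    obtain ⟨hu0, hut⟩ := hu
    obtain ⟨hω0, hωu⟩ := hω2_bd u hu0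
    obtain ⟨hγ10, hγ1u⟩ := hγ1_bd u hu0
    obtain ⟨hγ20, _⟩ := hγ2_bd u hu0
    have hweq : ω1 u = ω2 u := hωeq u hu0
    set w := ω2 u with hw
    set a := t - (u - w) with ha
    have haw : w ≤ a := by simp only [ha]; linarith
    have ha0 : 0 ≤ a := le_trans hω0 haw
    have hSY2w : 0 < SY2 w := hSY2_pos w hω0
    have hSY1w : 0 < SY1 w := hSY1_pos w hω0
    have hSY2a : 0 < SY2 a := hSY2_pos a ha0
    have hSY1a : 0 < SY1 a := hSY1_pos a ha0
    have hSY2g2 : 0 < SY2 (γ2 u) := hSY2_pos _ hγ20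
    have hSY2g1 : 0 < SY2 (γ1 u) := hSY2_pos _ hγ10
    have hSY1g1 : 0 < SY1 (γ1 u) := hSY1_pos _ hγ10
    constructor
    · exact mul_nonneg (div_nonneg hSY2a.le hSY2w.le) hSY2g2.le
    · -- g2 u ≤ g1 u
      have h1 : SY2 (γ2 u) ≤ SY2 (γ1 u) := hSY2_anti (hγle u hu0)
      have h2 : SY2 (γ1 u) ≤ SY1 (γ1 u) := by
        have := hhrY 0 (γ1 u) hγ10
        rw [hSY1_zero, hSY2_zero] at this; linarith
      have h3 : SY2 a / SY2 w ≤ SY1 a / SY1 w := by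
        rw [div_le_div_iff₀ hSY2w hSY1w]
        have := hhrY w a haw
        nlinarith
      have hq2 : 0 ≤ SY2 a / SY2 w := div_nonneg hSY2a.le hSY2w.le
      have hq1 : 0 ≤ SY1 a / SY1 w := div_nonneg hSY1a.le hSY1w.le
      calc (SY2 (t - (u - ω2 u)) / SY2 (ω2 u)) * SY2 (γ2 u)
          = (SY2 a / SY2 w) * SY2 (γ2 u) := rfl
        _ ≤ (SY2 a / SY2 w) * SY1 (γ1 u) :=
            mul_le_mul_of_nonneg_left (le_trans h1 h2) hq2
        _ ≤ (SY1 a / SY1 w) * SY1 (γ1 u) :=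
            mul_le_mul_of_nonneg_right h3 hSY1g1.le
        _ = (SY1 (t - (u - ω1 u)) / SY1 (ω1 u)) * SY1 (γ1 u) := by rw [hweq]
  -- pointwise integrand comparison
  have hpt : ∀ u ∈ Icc (0:ℝ) t,
      SX1 t * (g2 u * fX2 u) ≤ SX2 t * (g1 u * fX1 u) := by
    intro u hu
    obtain ⟨hg2nn, hg2le⟩ := hfacts u hu
    have hXf : SX1 t * fX2 u ≤ SX2 t * fX1 u := by
      have hB := hhrX u t hu.2
      have hu1 : 0 < SX1 u := hSX1_pos u hu.1
      have ht1 : 0 < SX1 t := hSX1_pos t ht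
      have hAu := hA u
      have key : SX1 t * fX2 u * SX1 u ≤ SX2 t * fX1 u * SX1 u := by
        nlinarith [mul_le_mul_of_nonneg_left hAu ht1.le,
          mul_le_mul_of_nonneg_left hB (hf1_nonneg u)]
      exact le_of_mul_le_mul_right key hu1
    have h1 : SX1 t * (g2 u * fX2 u) = g2 u * (SX1 t * fX2 u) := by ring
    have h2 : SX2 t * (g1 u * fX1 u) = g1 u * (SX2 t * fX1 u) := by ring
    rw [h1, h2]
    calc g2 u * (SX1 t * fX2 u) ≤ g2 u * (SX2 t * fX1 u) :=
          mul_le_mul_of_nonneg_left hXf hg2nn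
      _ ≤ g1 u * (SX2 t * fX1 u) := mul_le_mul_of_nonneg_right hg2le
          (mul_nonneg (hSX2_pos t ht).le (hf1_nonneg u))
  -- integrability of both integrands on [0,t]
  have hmeas : ∀ (S : ℝ → ℝ) (γ ω : ℝ → ℝ) (f : ℝ → ℝ), Antitone S →
      MonotoneOn γ (Set.Ici 0) → MonotoneOn ω (Set.Ici 0) → Continuous f →
      AEStronglyMeasurable (fun u => (S (t - (u - ω u)) / S (ω u)) * S (γ u) * f u)
        (volume.restrict (Ioc (0:ℝ) t)) := by
    intro S γ ω f hS hγ hω hf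
    have hωm : AEMeasurable ω (volume.restrict (Ioc (0:ℝ) t)) :=
      aemeasurable_restrict_of_monotoneOn measurableSet_Ioc (hω.mono (Set.Ioc_subset_Icc_self.trans Set.Icc_subset_Ici_self))
    have hγm : AEMeasurable γ (volume.restrict (Ioc (0:ℝ) t)) :=
      aemeasurable_restrict_of_monotoneOn measurableSet_Ioc (hγ.mono (Set.Ioc_subset_Icc_self.trans Set.Icc_subset_Ici_self))
    have h1 : AEMeasurable (fun u => S (t - (u - ω u))) (volume.restrict (Ioc (0:ℝ) t)) :=
      hS.measurable.comp_aemeasurable (aemeasurable_const.sub (aemeasurable_id.sub hωm))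
    have h2 : AEMeasurable (fun u => S (ω u)) (volume.restrict (Ioc (0:ℝ) t)) :=
      hS.measurable.comp_aemeasurable hωm
    have h3 : AEMeasurable (fun u => S (γ u)) (volume.restrict (Ioc (0:ℝ) t)) :=
      hS.measurable.comp_aemeasurable hγm
    exact (((h1.div h2).mul h3).mul hf.measurable.aemeasurable).aestronglyMeasurable
  have hbound : ∀ (S : ℝ → ℝ) (γ ω : ℝ → ℝ) (f : ℝ → ℝ), Antitone S →
      MonotoneOn γ (Set.Ici 0) → MonotoneOn ω (Set.Ici 0) →
      (∀ u ≥ 0, 0 < S u) → S 0 = 1 →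
      (∀ u ≥ 0, 0 ≤ γ u ∧ γ u ≤ u) → (∀ u ≥ 0, 0 ≤ ω u ∧ ω u ≤ u) →
      (∀ u, 0 ≤ f u) → Continuous f →
      IntervalIntegrable (fun u => (S (t - (u - ω u)) / S (ω u)) * S (γ u) * f u)
        volume 0 t := by
    intro S γ ω f hS hγm hωm hSpos hS0 hγbd hωbd hfnn hf
    rw [intervalIntegrable_iff, uIoc_of_le ht]
    obtain ⟨M, hM⟩ := (isCompact_Icc (a := (0:ℝ)) (b := t)).exists_bound_of_continuousOn
      hf.continuousOn
    have hSt : 0 < S t := hSpos t ht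
    refine Integrable.mono' (g := fun _ => (1 / S t) * M)
      (integrableOn_const measure_Ioc_lt_top.ne)
      (hmeas S γ ω f hS hγm hωm hf) ?_
    filter_upwards [ae_restrict_mem measurableSet_Ioc] with u hu
    have hu0 : (0:ℝ) ≤ u := hu.1.le
    have hut : u ≤ t := hu.2
    obtain ⟨hω0, hωu⟩ := hωbd u hu0
    obtain ⟨hγ0, hγu⟩ := hγbd u hu0
    have harg0 : 0 ≤ t - (u - ω u) := by linarith
    have hnum : S (t - (u - ω u)) ≤ 1 := by
      have := hS harg0; rw [hS0] at this; exact this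
    have hnum0 : 0 ≤ S (t - (u - ω u)) := (hSpos _ harg0).le
    have hden : S t ≤ S (ω u) := hS (by linarith)
    have hq : S (t - (u - ω u)) / S (ω u) ≤ 1 / S t :=
      div_le_div₀ zero_le_one hnum hSt hden
    have hq0 : 0 ≤ S (t - (u - ω u)) / S (ω u) :=
      div_nonneg hnum0 (hSpos _ hω0).le
    have hγ1 : S (γ u) ≤ 1 := by
      have := hS hγ0; rw [hS0] at this; exact this
    have hγ0' : 0 ≤ S (γ u) := (hSpos _ hγ0).le
    have hfM : f u ≤ M := by
      have := hM u ⟨hu0, hut⟩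
      rw [Real.norm_eq_abs, abs_of_nonneg (hfnn u)] at this; exact this
    have hg : S (t - (u - ω u)) / S (ω u) * S (γ u) ≤ 1 / S t := by
      calc S (t - (u - ω u)) / S (ω u) * S (γ u)
          ≤ (1 / S t) * S (γ u) := mul_le_mul_of_nonneg_right hq hγ0'
        _ ≤ (1 / S t) * 1 := mul_le_mul_of_nonneg_left hγ1 (by positivity)
        _ = 1 / S t := mul_one _
    have hgnn : 0 ≤ S (t - (u - ω u)) / S (ω u) * S (γ u) := mul_nonneg hq0 hγ0'
    rw [Real.norm_eq_abs, abs_of_nonneg (mul_nonneg hgnn (hfnn u))]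
    calc S (t - (u - ω u)) / S (ω u) * S (γ u) * f u
        ≤ (1 / S t) * f u := mul_le_mul_of_nonneg_right hg (hfnn u)
      _ ≤ (1 / S t) * M := mul_le_mul_of_nonneg_left hfM (by positivity)
  have hint1 : IntervalIntegrable (fun u => g1 u * fX1 u) volume 0 t := by
    have := hbound SY1 γ1 ω1 fX1 hSY1_anti hγ1_mono hω1_mono hSY1_pos hSY1_zero
      hγ1_bd hω1_bd hf1_nonneg hf1_cont
    simpa [hg1, mul_assoc] using this
  have hint2 : IntervalIntegrable (fun u => g2 u * fX2 u) volume 0 t := by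
    have := hbound SY2 γ2 ω2 fX2 hSY2_anti hγ2_mono hω2_mono hSY2_pos hSY2_zero
      hγ2_bd hω2_bd hf2_nonneg hf2_cont
    simpa [hg2, mul_assoc] using this
  -- main integral inequality
  have key : SX1 t * ∫ u in (0:ℝ)..t, g2 u * fX2 u ≤
      SX2 t * ∫ u in (0:ℝ)..t, g1 u * fX1 u := by
    rw [← intervalIntegral.integral_const_mul, ← intervalIntegral.integral_const_mul]
    exact intervalIntegral.integral_mono_on ht (hint2.const_mul _) (hint1.const_mul _) hpt
  have hI2 : (∫ u in (0:ℝ)..t, (SY2 (t - (u - ω2 u)) / SY2 (ω2 u)) * SY2 (γ2 u) * fX2 u)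
      = ∫ u in (0:ℝ)..t, g2 u * fX2 u := by
    simp [hg2]
  have hI1 : (∫ u in (0:ℝ)..t, (SY1 (t - (u - ω1 u)) / SY1 (ω1 u)) * SY1 (γ1 u) * fX1 u)
      = ∫ u in (0:ℝ)..t, g1 u * fX1 u := by
    simp [hg1]
  rw [hI1, hI2]
  nlinarith [mul_le_mul_of_nonneg_right key (hSH_nonneg t),
    mul_nonneg (mul_nonneg (hSX1_pos t ht).le (hSX2_pos t ht).le) (hSH_nonneg t)]
end

section
/- If X₁ ≤_hr X₂ and Y₂ ≤_hr Y₁, where Y₁ (or Y₂) has a log-concave survival function, ω₁(u) ≤ ω₂(u), and γ₁(u) ≤ γ₂(u) for all u ≥ 0, then V₂^s ≤_st V₁^s, where V₁^s = min{X₁⊛Y₁, X₂, X₃,...,Xₙ} and V₂^s = min{X₁, X₂⊛Y₂, X₃,...,Xₙ}. -/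
open MeasureTheory Set

lemma aux_concave_trapezoid (f : ℝ → ℝ) (hf : ConcaveOn ℝ (Set.Ici 0) f)
    {a b c : ℝ} (ha : 0 ≤ a) (hab : a ≤ b) (hc : 0 ≤ c) :
    f a + f (b + c) ≤ f b + f (a + c) := by
  rcases eq_or_lt_of_le (show a ≤ b + c by linarith) with h | h
  · have hc0 : c = 0 := by linarith
    have hab0 : a = b := by linarith
    subst hc0; subst hab0; simp
  · set d := b + c - a with hd
    have hd0 : 0 < d := by simp only [hd]; linarith
    set l := c / d with hl
    have hl0 : 0 ≤ l := div_nonneg hc hd0.le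
    have hl1 : l ≤ 1 := (div_le_one hd0).2 (by simp only [hd]; linarith)
    have hmem1 : a ∈ Set.Ici (0:ℝ) := ha
    have hmem2 : b + c ∈ Set.Ici (0:ℝ) := by
      simp only [Set.mem_Ici]; linarith
    have e1 : l * a + (1 - l) * (b + c) = b := by
      field_simp [hl]
      have hld : l * d = c := by rw [hl]; exact div_mul_cancel₀ c hd0.ne'
      linear_combination -hld + l * hd
    have e2 : (1 - l) * a + l * (b + c) = a + c := by
      field_simp [hl]
      have hld : l * d = c := by rw [hl]; exact div_mul_cancel₀ c hd0.ne'
      linear_combination hld - l * hd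
    have h1 := hf.2 hmem1 hmem2 hl0 (by linarith : (0:ℝ) ≤ 1 - l) (by ring)
    have h2 := hf.2 hmem1 hmem2 (by linarith : (0:ℝ) ≤ 1 - l) hl0 (by ring)
    simp only [smul_eq_mul] at h1 h2
    rw [e1] at h1
    rw [e2] at h2
    linarith

lemma aux_ratio_of_log (S : ℝ → ℝ) {a b c : ℝ} (hSa : 0 < S a) (hSb : 0 < S b)
    (hSac : 0 < S (a + c)) (hSbc : 0 < S (b + c))
    (key : Real.log (S a) + Real.log (S (b + c)) ≤ Real.log (S b) + Real.log (S (a + c))) :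
    S (b + c) / S b ≤ S (a + c) / S a := by
  rw [div_le_div_iff₀ hSb hSa]
  have h := Real.exp_le_exp.2 key
  rw [Real.exp_add, Real.exp_add, Real.exp_log hSa, Real.exp_log hSb,
    Real.exp_log hSac, Real.exp_log hSbc] at h
  nlinarith [h]

lemma aux_log_concave_ratio (S : ℝ → ℝ) (hpos : ∀ u ≥ (0:ℝ), 0 < S u)
    (hconc : ConcaveOn ℝ (Set.Ici 0) (fun u => Real.log (S u)))
    {a b c : ℝ} (ha : 0 ≤ a) (hab : a ≤ b) (hc : 0 ≤ c) :
    S (b + c) / S b ≤ S (a + c) / S a :=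
  aux_ratio_of_log S (hpos a ha) (hpos b (le_trans ha hab))
    (hpos _ (by linarith)) (hpos _ (by linarith))
    (aux_concave_trapezoid _ hconc ha hab hc)

lemma aux_log_convex_ratio (S : ℝ → ℝ) (hpos : ∀ u ≥ (0:ℝ), 0 < S u)
    (hconv : ConvexOn ℝ (Set.Ici 0) (fun u => Real.log (S u)))
    {a b c : ℝ} (hb : 0 ≤ b) (hba : b ≤ a) (hc : 0 ≤ c) :
    S (b + c) / S b ≤ S (a + c) / S a := by
  have h := aux_concave_trapezoid _ hconv.neg hb hba hc
  simp only [Pi.neg_apply] at h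
  exact aux_ratio_of_log S (hpos a (le_trans hb hba)) (hpos b hb)
    (hpos _ (by linarith)) (hpos _ (by linarith)) (by linarith)

lemma aux_hazard_cross (SX1 SX2 fX1 fX2 : ℝ → ℝ)
    (hd1 : ∀ u, HasDerivAt SX1 (-(fX1 u)) u) (hd2 : ∀ u, HasDerivAt SX2 (-(fX2 u)) u)
    (hhrX : ∀ s t : ℝ, s ≤ t → SX2 s * SX1 t ≤ SX2 t * SX1 s) (u : ℝ) :
    fX2 u * SX1 u ≤ fX1 u * SX2 u := by
  set g : ℝ → ℝ := fun s => SX2 s * SX1 u - SX2 u * SX1 s with hgdef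
  have hg : HasDerivAt g (-(fX2 u) * SX1 u - SX2 u * -(fX1 u)) u :=
    ((hd2 u).mul_const (SX1 u)).sub ((hd1 u).const_mul (SX2 u))
  have hslope := hasDerivAt_iff_tendsto_slope.mp hg
  have h0 : (0:ℝ) ≤ -(fX2 u) * SX1 u - SX2 u * -(fX1 u) := by
    refine ge_of_tendsto' hslope fun s => ?_
    rcases lt_trichotomy s u with hs | hs | hs
    · rw [slope_def_field]
      have hgs : g s ≤ 0 := by
        have := hhrX s u hs.le
        simp only [hgdef]; linarith
      have hgu : g u = 0 := by simp only [hgdef]; ring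
      rw [hgu]
      exact div_nonneg_iff.mpr (Or.inr ⟨by linarith, by linarith⟩)
    · subst hs; rw [slope_same]
    · rw [slope_def_field]
      have hgs : 0 ≤ g s := by
        have := hhrX u s hs.le
        simp only [hgdef]; linarith
      have hgu : g u = 0 := by simp only [hgdef]; ring
      rw [hgu]
      exact div_nonneg (by linarith) (by linarith)
  linarith

lemma aux_standby_integrable (SY γ ω fX : ℝ → ℝ)
    (hSY_anti : Antitone SY) (hSY_pos : ∀ u ≥ (0:ℝ), 0 < SY u) (hSY_zero : SY 0 = 1)
    (hγ_mono : MonotoneOn γ (Set.Ici 0)) (hω_mono : MonotoneOn ω (Set.Ici 0))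
    (hγ_bd : ∀ u ≥ (0:ℝ), 0 ≤ γ u ∧ γ u ≤ u) (hω_bd : ∀ u ≥ (0:ℝ), 0 ≤ ω u ∧ ω u ≤ u)
    (hf_cont : Continuous fX) (hf_nonneg : ∀ u, 0 ≤ fX u) (t : ℝ) (ht : 0 ≤ t) :
    IntervalIntegrable (fun u => (SY (t - (u - ω u)) / SY (ω u)) * SY (γ u) * fX u)
      MeasureTheory.volume 0 t := by
  rw [intervalIntegrable_iff_integrableOn_Ioc_of_le ht]
  set G : ℝ → ℝ := fun u =>
    (SY (t - (max u 0 - ω (max u 0))) / SY (ω (max u 0))) * SY (γ (max u 0)) * fX u with hGdef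
  have hmax : Monotone fun u : ℝ => max u 0 := fun a b hab => max_le_max hab le_rfl
  have hωm : Monotone fun u => ω (max u 0) := fun a b hab =>
    hω_mono (le_max_right a 0) (le_max_right b 0) (hmax hab)
  have hγm : Monotone fun u => γ (max u 0) := fun a b hab =>
    hγ_mono (le_max_right a 0) (le_max_right b 0) (hmax hab)
  have hGmeas : Measurable G := by
    have m0 : Measurable fun u : ℝ => t - (max u 0 - ω (max u 0)) :=
      measurable_const.sub (hmax.measurable.sub hωm.measurable)
    exact ((((hSY_anti.measurable.comp m0).div
      (hSY_anti.measurable.comp hωm.measurable)).mul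
      (hSY_anti.measurable.comp hγm.measurable)).mul hf_cont.measurable)
  have heq : ∀ u ∈ Set.Ioc (0:ℝ) t,
      G u = (SY (t - (u - ω u)) / SY (ω u)) * SY (γ u) * fX u := by
    intro u hu
    simp only [hGdef, max_eq_left hu.1.le]
  refine MeasureTheory.Integrable.mono' (hf_cont.integrableOn_Ioc) ?_ ?_
  · exact hGmeas.aestronglyMeasurable.congr
      ((MeasureTheory.ae_restrict_iff' measurableSet_Ioc).2 (.of_forall heq))
  · refine (MeasureTheory.ae_restrict_iff' measurableSet_Ioc).2 (.of_forall fun u hu => ?_)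
    have hu0 : (0:ℝ) ≤ u := hu.1.le
    have hω0 : 0 ≤ ω u := (hω_bd u hu0).1
    have hSωpos : 0 < SY (ω u) := hSY_pos _ hω0
    have harg : ω u ≤ t - (u - ω u) := by linarith [hu.2]
    have hrat1 : SY (t - (u - ω u)) ≤ SY (ω u) := hSY_anti harg
    have hrat0 : 0 ≤ SY (t - (u - ω u)) := (hSY_pos _ (by linarith)).le
    have hratio : SY (t - (u - ω u)) / SY (ω u) ≤ 1 := (div_le_one hSωpos).2 hrat1
    have hratio0 : 0 ≤ SY (t - (u - ω u)) / SY (ω u) := div_nonneg hrat0 hSωpos.le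
    have hγ1 : SY (γ u) ≤ 1 := hSY_zero ▸ hSY_anti (hγ_bd u hu0).1
    have hγ0 : 0 ≤ SY (γ u) := (hSY_pos _ (hγ_bd u hu0).1).le
    have hval : 0 ≤ (SY (t - (u - ω u)) / SY (ω u)) * SY (γ u) * fX u :=
      mul_nonneg (mul_nonneg hratio0 hγ0) (hf_nonneg u)
    rw [Real.norm_eq_abs, abs_of_nonneg hval]
    calc (SY (t - (u - ω u)) / SY (ω u)) * SY (γ u) * fX u
        ≤ 1 * 1 * fX u := by
          apply mul_le_mul_of_nonneg_right _ (hf_nonneg u)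
          calc (SY (t - (u - ω u)) / SY (ω u)) * SY (γ u) ≤ 1 * SY (γ u) :=
                mul_le_mul_of_nonneg_right hratio hγ0
            _ ≤ 1 * 1 := by rw [one_mul, one_mul]; exact hγ1
      _ = fX u := by ring
theorem model_II_series_st_hr_case_ii
    (SX1 SX2 SY1 SY2 SH fX1 fX2 : ℝ → ℝ) (γ1 γ2 ω1 ω2 : ℝ → ℝ)
    -- densities
    (hd1 : ∀ u, HasDerivAt SX1 (-(fX1 u)) u) (hd2 : ∀ u, HasDerivAt SX2 (-(fX2 u)) u)
    (hf1_nonneg : ∀ u, 0 ≤ fX1 u) (hf2_nonneg : ∀ u, 0 ≤ fX2 u)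
    (hf1_cont : Continuous fX1) (hf2_cont : Continuous fX2)
    -- survival functions of the nonnegative, absolutely continuous lifetimes
    (hSX1_pos : ∀ u ≥ 0, 0 < SX1 u) (hSX2_pos : ∀ u ≥ 0, 0 < SX2 u)
    (hSY1_anti : Antitone SY1) (hSY2_anti : Antitone SY2)
    (hSY1_pos : ∀ u ≥ 0, 0 < SY1 u) (hSY2_pos : ∀ u ≥ 0, 0 < SY2 u)
    (hSY1_zero : SY1 0 = 1) (hSY2_zero : SY2 0 = 1)
    (hSH_nonneg : ∀ u, 0 ≤ SH u)
    -- model functions: increasing, 0 ≤ γᵢ(u) ≤ u and 0 ≤ ωᵢ(u) ≤ u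
    (hγ1_mono : MonotoneOn γ1 (Set.Ici 0)) (hγ2_mono : MonotoneOn γ2 (Set.Ici 0))
    (hω1_mono : MonotoneOn ω1 (Set.Ici 0)) (hω2_mono : MonotoneOn ω2 (Set.Ici 0))
    (hγ1_bd : ∀ u ≥ 0, 0 ≤ γ1 u ∧ γ1 u ≤ u) (hγ2_bd : ∀ u ≥ 0, 0 ≤ γ2 u ∧ γ2 u ≤ u)
    (hω1_bd : ∀ u ≥ 0, 0 ≤ ω1 u ∧ ω1 u ≤ u) (hω2_bd : ∀ u ≥ 0, 0 ≤ ω2 u ∧ ω2 u ≤ u)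
    -- X₁ ≤_hr X₂ : F̄_{X₂}/F̄_{X₁} increasing
    (hhrX : ∀ s t : ℝ, s ≤ t → SX2 s * SX1 t ≤ SX2 t * SX1 s)
    -- Y₂ ≤_hr Y₁ : F̄_{Y₁}/F̄_{Y₂} increasing
    (hhrY : ∀ s t : ℝ, s ≤ t → SY1 s * SY2 t ≤ SY1 t * SY2 s)
    -- condition (ii): Y₁ or Y₂ has a log-concave (log-convex) survival function and
    -- ω₁ ≤ ω₂ (resp. ω₁ ≥ ω₂); in both cases γ₁ ≤ γ₂
    (hγle : ∀ u ≥ 0, γ1 u ≤ γ2 u)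
    (hcase :
      ((ConcaveOn ℝ (Set.Ici 0) (fun u => Real.log (SY1 u)) ∨
        ConcaveOn ℝ (Set.Ici 0) (fun u => Real.log (SY2 u))) ∧ ∀ u ≥ 0, ω1 u ≤ ω2 u) ∨
      ((ConvexOn ℝ (Set.Ici 0) (fun u => Real.log (SY1 u)) ∨
        ConvexOn ℝ (Set.Ici 0) (fun u => Real.log (SY2 u))) ∧ ∀ u ≥ 0, ω2 u ≤ ω1 u)) :
    -- conclusion: V₂ˢ ≤_st V₁ˢ
    ∀ t ≥ 0,
      SX1 t * (SX2 t + ∫ u in (0:ℝ)..t,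
          (SY2 (t - (u - ω2 u)) / SY2 (ω2 u)) * SY2 (γ2 u) * fX2 u) * SH t ≤
      (SX1 t + ∫ u in (0:ℝ)..t,
          (SY1 (t - (u - ω1 u)) / SY1 (ω1 u)) * SY1 (γ1 u) * fX1 u) * SX2 t * SH t := by
  intro t ht
  set g1 : ℝ → ℝ := fun u => (SY1 (t - (u - ω1 u)) / SY1 (ω1 u)) * SY1 (γ1 u) * fX1 u with hg1
  set g2 : ℝ → ℝ := fun u => (SY2 (t - (u - ω2 u)) / SY2 (ω2 u)) * SY2 (γ2 u) * fX2 u with hg2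
  have hint1 : IntervalIntegrable g1 MeasureTheory.volume 0 t :=
    aux_standby_integrable SY1 γ1 ω1 fX1 hSY1_anti hSY1_pos hSY1_zero hγ1_mono hω1_mono
      hγ1_bd hω1_bd hf1_cont hf1_nonneg t ht
  have hint2 : IntervalIntegrable g2 MeasureTheory.volume 0 t :=
    aux_standby_integrable SY2 γ2 ω2 fX2 hSY2_anti hSY2_pos hSY2_zero hγ2_mono hω2_mono
      hγ2_bd hω2_bd hf2_cont hf2_nonneg t ht
  have key : SX1 t * (∫ u in (0:ℝ)..t, g2 u) ≤ (∫ u in (0:ℝ)..t, g1 u) * SX2 t := by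
    rw [← intervalIntegral.integral_const_mul, mul_comm, ← intervalIntegral.integral_const_mul]
    refine intervalIntegral.integral_mono_on ht (hint2.const_mul _) (hint1.const_mul _)
      fun u hu => ?_
    obtain ⟨hu0, hut⟩ := hu
    have hc : (0:ℝ) ≤ t - u := by linarith
    have ha0 : 0 ≤ ω1 u := (hω1_bd u hu0).1
    have hb0 : 0 ≤ ω2 u := (hω2_bd u hu0).1
    have e1 : t - (u - ω1 u) = ω1 u + (t - u) := by ring
    have e2 : t - (u - ω2 u) = ω2 u + (t - u) := by ring
    -- hr ratio step
    have hrstep : ∀ x : ℝ, 0 ≤ x →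
        SY2 (x + (t - u)) / SY2 x ≤ SY1 (x + (t - u)) / SY1 x := by
      intro x hx
      rw [div_le_div_iff₀ (hSY2_pos x hx) (hSY1_pos x hx)]
      have h := hhrY x (x + (t - u)) (by linarith)
      nlinarith [h]
    -- Claim B : ratio comparison
    have claimB : SY2 (ω2 u + (t - u)) / SY2 (ω2 u) ≤ SY1 (ω1 u + (t - u)) / SY1 (ω1 u) := by
      rcases hcase with ⟨hlc, hωle⟩ | ⟨hlv, hωge⟩
      · have hab : ω1 u ≤ ω2 u := hωle u hu0
        rcases hlc with h1 | h2
        · exact le_trans (hrstep (ω2 u) hb0)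
            (aux_log_concave_ratio SY1 hSY1_pos h1 ha0 hab hc)
        · exact le_trans (aux_log_concave_ratio SY2 hSY2_pos h2 ha0 hab hc)
            (hrstep (ω1 u) ha0)
      · have hba : ω2 u ≤ ω1 u := hωge u hu0
        rcases hlv with h1 | h2
        · exact le_trans (hrstep (ω2 u) hb0)
            (aux_log_convex_ratio SY1 hSY1_pos h1 hb0 hba hc)
        · exact le_trans (aux_log_convex_ratio SY2 hSY2_pos h2 hb0 hba hc)
            (hrstep (ω1 u) ha0)
    -- Claim A : tail comparison
    have claimA : SY2 (γ2 u) ≤ SY1 (γ1 u) := by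
      have h1 : SY2 (γ2 u) ≤ SY2 (γ1 u) := hSY2_anti (hγle u hu0)
      have h2 := hhrY 0 (γ1 u) (hγ1_bd u hu0).1
      rw [hSY1_zero, hSY2_zero, one_mul, mul_one] at h2
      linarith
    -- nonnegativity facts
    have hφ2_nonneg : 0 ≤ SY2 (t - (u - ω2 u)) / SY2 (ω2 u) * SY2 (γ2 u) := by
      rw [e2]
      exact mul_nonneg (div_nonneg (hSY2_pos _ (by linarith)).le (hSY2_pos _ hb0).le)
        (hSY2_pos _ (hγ2_bd u hu0).1).le
    have hφ1_nonneg : 0 ≤ SY1 (t - (u - ω1 u)) / SY1 (ω1 u) * SY1 (γ1 u) := by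
      rw [e1]
      exact mul_nonneg (div_nonneg (hSY1_pos _ (by linarith)).le (hSY1_pos _ ha0).le)
        (hSY1_pos _ (hγ1_bd u hu0).1).le
    have hφ : SY2 (t - (u - ω2 u)) / SY2 (ω2 u) * SY2 (γ2 u) ≤
        SY1 (t - (u - ω1 u)) / SY1 (ω1 u) * SY1 (γ1 u) := by
      rw [e1, e2]
      exact mul_le_mul claimB claimA (hSY2_pos _ (hγ2_bd u hu0).1).le
        (div_nonneg (hSY1_pos _ (by linarith)).le (hSY1_pos _ ha0).le)
    -- density cross inequality
    have hfcross : SX1 t * fX2 u ≤ SX2 t * fX1 u := by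
      have A := aux_hazard_cross SX1 SX2 fX1 fX2 hd1 hd2 hhrX u
      have B := hhrX u t hut
      have hpos : 0 < SX1 u * SX2 u := mul_pos (hSX1_pos u hu0) (hSX2_pos u hu0)
      have prod : fX2 u * SX1 u * (SX2 u * SX1 t) ≤ fX1 u * SX2 u * (SX2 t * SX1 u) :=
        mul_le_mul A B (mul_nonneg (hSX2_pos u hu0).le (hSX1_pos t ht).le)
          (mul_nonneg (hf1_nonneg u) (hSX2_pos u hu0).le)
      have prod' : SX1 t * fX2 u * (SX1 u * SX2 u) ≤ SX2 t * fX1 u * (SX1 u * SX2 u) := by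
        nlinarith [prod]
      exact le_of_mul_le_mul_right prod' hpos
    calc SX1 t * g2 u
        = (SY2 (t - (u - ω2 u)) / SY2 (ω2 u) * SY2 (γ2 u)) * (SX1 t * fX2 u) := by
          simp only [hg2]; ring
      _ ≤ (SY1 (t - (u - ω1 u)) / SY1 (ω1 u) * SY1 (γ1 u)) * (SX2 t * fX1 u) :=
          mul_le_mul hφ hfcross (mul_nonneg (hSX1_pos t ht).le (hf2_nonneg u)) hφ1_nonneg
      _ = SX2 t * g1 u := by simp only [hg1]; ring
  have hfinal : SX1 t * (SX2 t + ∫ u in (0:ℝ)..t, g2 u) ≤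
      (SX1 t + ∫ u in (0:ℝ)..t, g1 u) * SX2 t := by nlinarith [key]
  calc SX1 t * (SX2 t + ∫ u in (0:ℝ)..t, g2 u) * SH t
      ≤ (SX1 t + ∫ u in (0:ℝ)..t, g1 u) * SX2 t * SH t :=
        mul_le_mul_of_nonneg_right hfinal (hSH_nonneg t)
end

section
/- Suppose X₁⊛Y₁ and X₂⊛Y₂ share the same model functions γ, ω, with δ(u) = u - ω(u) increasing and ω(u) = γ(u) for all u ≥ 0. If X₁ ≤_hr X₂ and Y₂ ≤_st Y₁, then V₂^s ≤_st V₁^s, where V₁^s = min{X₁⊛Y₁, X₂, X₃,...,Xₙ} and V₂^s = min{X₁, X₂⊛Y₂, X₃,...,Xₙ}. -/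
open Filter Set intervalIntegral Topology

/-- If `h` attains a minimum at `t` over `(-∞, t]` and has derivative `d` at `t`,
then `d ≤ 0`. -/
lemma aux_deriv_nonpos {h : ℝ → ℝ} {d t : ℝ} (hd : HasDerivAt h d t)
    (hmin : ∀ s ≤ t, h t ≤ h s) : d ≤ 0 := by
  have H : Tendsto (slope h t) (𝓝[<] t) (𝓝 d) :=
    (hasDerivAt_iff_tendsto_slope.mp hd).mono_left
      (nhdsWithin_mono _ (fun x hx => ne_of_lt hx))
  refine le_of_tendsto H ?_
  filter_upwards [self_mem_nhdsWithin] with s hs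
  have hs' : s < t := hs
  have : slope h t s = (h s - h t) / (s - t) := by
    rw [slope_def_field]
  rw [this]
  exact div_nonpos_of_nonneg_of_nonpos (sub_nonneg.2 (hmin s hs'.le)) (by linarith)

theorem model_II_series_st_common_model
    (SX1 SX2 SY1 SY2 SH fX1 fX2 : ℝ → ℝ) (γ ω : ℝ → ℝ)
    -- densities
    (hd1 : ∀ u, HasDerivAt SX1 (-(fX1 u)) u) (hd2 : ∀ u, HasDerivAt SX2 (-(fX2 u)) u)
    (hf1_nonneg : ∀ u, 0 ≤ fX1 u) (hf2_nonneg : ∀ u, 0 ≤ fX2 u)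
    (hf1_cont : Continuous fX1) (hf2_cont : Continuous fX2)
    -- survival functions
    (hSX1_pos : ∀ u ≥ 0, 0 < SX1 u) (hSX2_pos : ∀ u ≥ 0, 0 < SX2 u)
    (hSY1_anti : Antitone SY1) (hSY2_anti : Antitone SY2)
    (hSY1_nonneg : ∀ u, 0 ≤ SY1 u) (hSY2_nonneg : ∀ u, 0 ≤ SY2 u)
    (hSH_nonneg : ∀ u, 0 ≤ SH u)
    -- common model function: γ, ω increasing, 0 ≤ ω(u) = γ(u) ≤ u, δ increasing
    (hγ_mono : MonotoneOn γ (Set.Ici 0)) (hω_mono : MonotoneOn ω (Set.Ici 0))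
    (hω_bd : ∀ u ≥ 0, 0 ≤ ω u ∧ ω u ≤ u)
    (hωγ : ∀ u ≥ 0, ω u = γ u)
    (hδ_mono : MonotoneOn (fun u => u - ω u) (Set.Ici 0))
    -- X₁ ≤_hr X₂ and Y₂ ≤_st Y₁
    (hhrX : ∀ s t : ℝ, s ≤ t → SX2 s * SX1 t ≤ SX2 t * SX1 s)
    (hstY : ∀ u, SY2 u ≤ SY1 u) :
    -- conclusion: V₂ˢ ≤_st V₁ˢ
    ∀ t ≥ 0,
      SX1 t * (SX2 t + ∫ u in (0:ℝ)..t, SY2 (t - (u - ω u)) * fX2 u) * SH t ≤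
      (SX1 t + ∫ u in (0:ℝ)..t, SY1 (t - (u - ω u)) * fX1 u) * SX2 t * SH t := by
  -- pointwise density inequality from the hazard-rate order
  have hdens : ∀ u : ℝ, fX2 u * SX1 u ≤ fX1 u * SX2 u := by
    intro u
    have hder : HasDerivAt (fun s => SX2 u * SX1 s - SX2 s * SX1 u)
        (SX2 u * (-(fX1 u)) - (-(fX2 u)) * SX1 u) u :=
      ((hd1 u).const_mul (SX2 u)).sub ((hd2 u).mul_const (SX1 u))
    have hmin : ∀ s ≤ u, SX2 u * SX1 u - SX2 u * SX1 u ≤ SX2 u * SX1 s - SX2 s * SX1 u := by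
      intro s hs
      have := hhrX s u hs
      linarith
    have := aux_deriv_nonpos hder hmin
    nlinarith
  intro t ht
  -- pointwise key inequality on [0, t]
  have hkey : ∀ u ∈ Set.Icc (0:ℝ) t,
      SX1 t * (SY2 (t - (u - ω u)) * fX2 u) ≤ SX2 t * (SY1 (t - (u - ω u)) * fX1 u) := by
    intro u hu
    have hu0 : (0:ℝ) ≤ u := hu.1
    have hS1u : 0 < SX1 u := hSX1_pos u hu0
    have h1 : SX1 t * fX2 u ≤ SX2 t * fX1 u := by
      have hr : SX2 u * SX1 t ≤ SX2 t * SX1 u := hhrX u t hu.2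
      have h2 : fX2 u * SX1 u ≤ fX1 u * SX2 u := hdens u
      have hS1t : 0 ≤ SX1 t := (hSX1_pos t ht).le
      have : (SX1 t * fX2 u) * SX1 u ≤ (SX2 t * fX1 u) * SX1 u := by
        nlinarith [hf1_nonneg u, hf2_nonneg u]
      exact le_of_mul_le_mul_right this hS1u
    have hY : SY2 (t - (u - ω u)) ≤ SY1 (t - (u - ω u)) := hstY _
    calc SX1 t * (SY2 (t - (u - ω u)) * fX2 u)
        = SY2 (t - (u - ω u)) * (SX1 t * fX2 u) := by ring
      _ ≤ SY1 (t - (u - ω u)) * (SX2 t * fX1 u) := by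
          apply mul_le_mul hY h1
          · exact mul_nonneg (hSX1_pos t ht).le (hf2_nonneg u)
          · exact hSY1_nonneg _
      _ = SX2 t * (SY1 (t - (u - ω u)) * fX1 u) := by ring
  -- integrability
  have hmono1 : MonotoneOn (fun u => SY1 (t - (u - ω u))) (Set.uIcc 0 t) := by
    intro a ha b hb hab
    have ha' : a ∈ Set.Ici (0:ℝ) := by
      rcases Set.mem_uIcc.mp ha with h | h
      · exact h.1
      · exact le_trans ht h.1
    have hb' : b ∈ Set.Ici (0:ℝ) := by
      rcases Set.mem_uIcc.mp hb with h | h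
      · exact h.1
      · exact le_trans ht h.1
    exact hSY1_anti (by have := hδ_mono ha' hb' hab; simp only at this; linarith)
  have hmono2 : MonotoneOn (fun u => SY2 (t - (u - ω u))) (Set.uIcc 0 t) := by
    intro a ha b hb hab
    have ha' : a ∈ Set.Ici (0:ℝ) := by
      rcases Set.mem_uIcc.mp ha with h | h
      · exact h.1
      · exact le_trans ht h.1
    have hb' : b ∈ Set.Ici (0:ℝ) := by
      rcases Set.mem_uIcc.mp hb with h | h
      · exact h.1
      · exact le_trans ht h.1
    exact hSY2_anti (by have := hδ_mono ha' hb' hab; simp only at this; linarith)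
  have hint1 : IntervalIntegrable (fun u => SY1 (t - (u - ω u)) * fX1 u)
      MeasureTheory.volume 0 t :=
    hmono1.intervalIntegrable.mul_continuousOn hf1_cont.continuousOn
  have hint2 : IntervalIntegrable (fun u => SY2 (t - (u - ω u)) * fX2 u)
      MeasureTheory.volume 0 t :=
    hmono2.intervalIntegrable.mul_continuousOn hf2_cont.continuousOn
  -- main integral inequality
  have hmain : SX1 t * (∫ u in (0:ℝ)..t, SY2 (t - (u - ω u)) * fX2 u) ≤
      SX2 t * (∫ u in (0:ℝ)..t, SY1 (t - (u - ω u)) * fX1 u) := by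
    rw [← intervalIntegral.integral_const_mul, ← intervalIntegral.integral_const_mul]
    exact intervalIntegral.integral_mono_on ht (hint2.const_mul _) (hint1.const_mul _) hkey
  have hSH := hSH_nonneg t
  nlinarith [hSX1_pos t ht, hSX2_pos t ht,
    mul_le_mul_of_nonneg_right hmain hSH]
end

section
/- With the notation of Model II, if γ₁(u) ≤ γ₂(u) for all u ≥ 0, X₁ ≤_st X₂, and Y₂ ≤_st Y₁, then P(V₁^s > V₂^s) ≥ P(V₂^s > V₁^s), i.e., V₂^s ≤_sp V₁^s. Here P(V₁^s > V₂^s) = P(Y₁* > X₁, X₂ > X₁, H₁ > X₁) where H₁ = min{X₃,...,Xₙ} and Y_i* has survival function F̄_{Y_i}(γ_i(·)). -/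
open MeasureTheory ProbabilityTheory

section Aux

open Set

private lemma aux_Ici_meas_le (μ ν : Measure ℝ) [IsProbabilityMeasure μ] [IsProbabilityMeasure ν]
    (hst : ∀ t, μ (Ioi t) ≤ ν (Ioi t)) (a : ℝ) : μ (Ici a) ≤ ν (Ici a) := by
  have hseq : Ici a = ⋂ n : ℕ, Ioi (a - 1 / (n + 1)) := by
    ext x
    simp only [mem_Ici, mem_iInter, mem_Ioi]
    constructor
    · intro hx n
      have : (0:ℝ) < 1 / (n + 1) := by positivity
      linarith
    · intro hx
      by_contra hlt
      push_neg at hlt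
      obtain ⟨n, hn⟩ := exists_nat_one_div_lt (by linarith : (0:ℝ) < a - x)
      have := hx n
      have : x > a - 1/(n+1) := this
      linarith
  have hdir : ∀ (κ : Measure ℝ) [IsProbabilityMeasure κ],
      κ (Ici a) = ⨅ n : ℕ, κ (Ioi (a - 1 / ((n:ℝ) + 1))) := by
    intro κ _
    rw [hseq]
    refine Directed.measure_iInter (fun n => measurableSet_Ioi.nullMeasurableSet) ?_
      ⟨0, measure_ne_top _ _⟩
    intro m n
    rcases le_total m n with h | h
    · exact ⟨n, by
        refine ⟨Ioi_subset_Ioi ?_, subset_rfl⟩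
        have : 1 / ((n:ℝ) + 1) ≤ 1 / ((m:ℝ) + 1) := by
          apply one_div_le_one_div_of_le (by positivity)
          have : (m:ℝ) ≤ n := Nat.cast_le.mpr h; linarith
        linarith⟩
    · exact ⟨m, by
        refine ⟨subset_rfl, Ioi_subset_Ioi ?_⟩
        have : 1 / ((m:ℝ) + 1) ≤ 1 / ((n:ℝ) + 1) := by
          apply one_div_le_one_div_of_le (by positivity)
          have : (n:ℝ) ≤ m := Nat.cast_le.mpr h; linarith
        linarith⟩
  rw [hdir μ, hdir ν]
  exact iInf_mono fun n => hst _

private lemma aux_upperSet_meas_le (μ ν : Measure ℝ) [IsProbabilityMeasure μ]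
    [IsProbabilityMeasure ν]
    (hst : ∀ t, μ (Ioi t) ≤ ν (Ioi t)) {S : Set ℝ} (hS : IsUpperSet S) :
    μ S ≤ ν S := by
  rcases eq_empty_or_nonempty S with h | hne
  · simp [h]
  by_cases hu : S = univ
  · simp [hu]
  obtain ⟨x, hx⟩ : ∃ x, x ∉ S := by
    by_contra h; push_neg at h; exact hu (eq_univ_of_forall h)
  have hbdd : BddBelow S := ⟨x, fun s hs => by
    by_contra hlt; push_neg at hlt; exact hx (hS hlt.le hs)⟩
  set a := sInf S with ha
  have hIoi : Ioi a ⊆ S := by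
    intro y hy
    obtain ⟨s, hsS, hsy⟩ := (csInf_lt_iff hbdd hne).mp hy
    exact hS hsy.le hsS
  have hIci : S ⊆ Ici a := fun s hs => csInf_le hbdd hs
  by_cases haS : a ∈ S
  · have : S = Ici a := Subset.antisymm hIci (fun y hy => hS hy haS)
    rw [this]; exact aux_Ici_meas_le μ ν hst a
  · have : S = Ioi a := by
      apply Subset.antisymm _ hIoi
      intro s hs
      rcases lt_or_eq_of_le (mem_Ici.mp (hIci hs)) with h | h
      · exact h
      · exact absurd (h ▸ hs) haS
    rw [this]; exact hst a

private lemma aux_st_mono (μ ν : Measure ℝ) [IsProbabilityMeasure μ] [IsProbabilityMeasure ν]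
    (hst : ∀ t, μ (Ioi t) ≤ ν (Ioi t)) (h : ℝ → ENNReal) (hmono : Monotone h)
    (hbd : ∀ x, h x ≤ 1) :
    ∫⁻ x, h x ∂μ ≤ ∫⁻ x, h x ∂ν := by
  set hr : ℝ → ℝ := fun x => (h x).toReal with hhr
  have hne : ∀ x, h x ≠ ⊤ := fun x => ((hbd x).trans_lt ENNReal.one_lt_top).ne
  have hrmono : Monotone hr := fun x y hxy =>
    ENNReal.toReal_mono (hne y) (hmono hxy)
  have hofr : ∀ x, ENNReal.ofReal (hr x) = h x := fun x => ENNReal.ofReal_toReal (hne x)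
  have hrm : Measurable hr := ENNReal.measurable_toReal.comp hmono.measurable
  have key : ∀ (κ : Measure ℝ), ∫⁻ x, h x ∂κ = ∫⁻ t in Ioi 0, κ {a : ℝ | t < hr a} := by
    intro κ
    rw [← lintegral_congr (fun x => hofr x)]
    exact lintegral_eq_lintegral_meas_lt κ
      (Filter.Eventually.of_forall fun x => ENNReal.toReal_nonneg) hrm.aemeasurable
  rw [key μ, key ν]
  refine lintegral_mono fun t => ?_
  exact aux_upperSet_meas_le μ ν hst (fun x y hxy hx => lt_of_lt_of_le hx (hrmono hxy))

private lemma aux_st_anti (μ ν : Measure ℝ) [IsProbabilityMeasure μ] [IsProbabilityMeasure ν]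
    (hst : ∀ t, μ (Ioi t) ≤ ν (Ioi t)) (h : ℝ → ENNReal) (hanti : Antitone h)
    (hbd : ∀ x, h x ≤ 1) :
    ∫⁻ x, h x ∂ν ≤ ∫⁻ x, h x ∂μ := by
  set hr : ℝ → ℝ := fun x => (h x).toReal with hhr
  have hne : ∀ x, h x ≠ ⊤ := fun x => ((hbd x).trans_lt ENNReal.one_lt_top).ne
  have hranti : Antitone hr := fun x y hxy =>
    ENNReal.toReal_mono (hne x) (hanti hxy)
  have hofr : ∀ x, ENNReal.ofReal (hr x) = h x := fun x => ENNReal.ofReal_toReal (hne x)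
  have hrm : Measurable hr := ENNReal.measurable_toReal.comp hanti.measurable
  have key : ∀ (κ : Measure ℝ), ∫⁻ x, h x ∂κ = ∫⁻ t in Ioi 0, κ {a : ℝ | t < hr a} := by
    intro κ
    rw [← lintegral_congr (fun x => hofr x)]
    exact lintegral_eq_lintegral_meas_lt κ
      (Filter.Eventually.of_forall fun x => ENNReal.toReal_nonneg) hrm.aemeasurable
  rw [key μ, key ν]
  refine lintegral_mono fun t => ?_
  have hUm : MeasurableSet {a : ℝ | hr a ≤ t} := measurableSet_le hrm measurable_const
  have hU : IsUpperSet {a : ℝ | hr a ≤ t} := fun x y hxy hx => le_trans (hranti hxy) hx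
  have hcompl : ∀ (κ : Measure ℝ) [IsProbabilityMeasure κ],
      κ {a : ℝ | t < hr a} = 1 - κ {a : ℝ | hr a ≤ t} := by
    intro κ _
    have : {a : ℝ | t < hr a} = {a : ℝ | hr a ≤ t}ᶜ := by
      ext y; simp [not_le]
    rw [this, measure_compl hUm (measure_ne_top _ _), measure_univ]
  rw [hcompl μ, hcompl ν]
  exact tsub_le_tsub_left (aux_upperSet_meas_le μ ν hst hU) 1

private lemma aux_swap (μ ν : Measure ℝ) [SFinite μ] [SFinite ν]
    (g : ℝ → ENNReal) (hg : Measurable g) :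
    ∫⁻ x, g x * ν (Ioi x) ∂μ = ∫⁻ y, (∫⁻ x in Iio y, g x ∂μ) ∂ν := by
  set F : ℝ → ℝ → ENNReal := fun x y => if x < y then g x else 0 with hF
  have hFm : Measurable (Function.uncurry F) := by
    apply Measurable.ite (measurableSet_lt measurable_fst measurable_snd)
    · exact hg.comp measurable_fst
    · exact measurable_const
  have h1 : ∀ x, ∫⁻ y, F x y ∂ν = g x * ν (Ioi x) := by
    intro x
    have : F x = (Ioi x).indicator (fun _ => g x) := by
      ext y; simp only [hF, indicator, mem_Ioi]
    rw [this, lintegral_indicator measurableSet_Ioi _, setLIntegral_const]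
  have h2 : ∀ y, ∫⁻ x, F x y ∂μ = ∫⁻ x in Iio y, g x ∂μ := by
    intro y
    have : (fun x => F x y) = (Iio y).indicator g := by
      ext x; simp only [hF, indicator, mem_Iio]
    rw [this, lintegral_indicator measurableSet_Iio _]
  calc ∫⁻ x, g x * ν (Ioi x) ∂μ = ∫⁻ x, ∫⁻ y, F x y ∂ν ∂μ := by
        exact lintegral_congr fun x => (h1 x).symm
    _ = ∫⁻ y, ∫⁻ x, F x y ∂μ ∂ν := lintegral_lintegral_swap hFm.aemeasurable
    _ = ∫⁻ y, (∫⁻ x in Iio y, g x ∂μ) ∂ν := lintegral_congr fun y => h2 y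

private lemma aux_repr {Ω : Type*} [MeasurableSpace Ω] (P : Measure Ω) [IsProbabilityMeasure P]
    (V : Fin 5 → Ω → ℝ) (hmeas : ∀ i, Measurable (V i))
    (hindep : iIndepFun V P)
    (i j k l : Fin 5) (hij : i ≠ j) (hik : i ≠ k) (hil : i ≠ l)
    (hjk : j ≠ k) (hjl : j ≠ l) (hkl : k ≠ l) :
    P {ω | V j ω > V i ω ∧ V k ω > V i ω ∧ V l ω > V i ω}
      = ∫⁻ t, (P {ω | V j ω > t}) * (P {ω | V k ω > t}) * (P {ω | V l ω > t})
          ∂(P.map (V i)) := by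
  classical
  set W : Ω → ℝ × ℝ × ℝ := fun ω => (V j ω, V k ω, V l ω) with hW
  have hWm : Measurable W := (hmeas j).prodMk ((hmeas k).prodMk (hmeas l))
  have hfin := hindep.indepFun_finset {i} ({j, k, l} : Finset (Fin 5))
    (by simp [Finset.disjoint_left, hij, hik, hil]) hmeas
  have hIW : IndepFun (V i) W P := by
    have hmem_j : j ∈ ({j, k, l} : Finset (Fin 5)) := by simp
    have hmem_k : k ∈ ({j, k, l} : Finset (Fin 5)) := by simp
    have hmem_l : l ∈ ({j, k, l} : Finset (Fin 5)) := by simp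
    have := hfin.comp (_mγ := inferInstance) (_mγ' := inferInstance)
      (φ := fun x : ({i} : Finset (Fin 5)) → ℝ => x ⟨i, by simp⟩)
      (ψ := fun x : (({j, k, l} : Finset (Fin 5)) : Finset (Fin 5)) → ℝ =>
        (x ⟨j, hmem_j⟩, x ⟨k, hmem_k⟩, x ⟨l, hmem_l⟩))
      (measurable_pi_apply _)
      ((measurable_pi_apply _).prodMk ((measurable_pi_apply _).prodMk (measurable_pi_apply _)))
    exact this
  have hmap : P.map (fun ω => (V i ω, W ω)) = (P.map (V i)).prod (P.map W) :=
    (indepFun_iff_map_prod_eq_prod_map_map (hmeas i).aemeasurable hWm.aemeasurable).mp hIW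
  set s : Set (ℝ × (ℝ × ℝ × ℝ)) :=
    {p | p.2.1 > p.1 ∧ p.2.2.1 > p.1 ∧ p.2.2.2 > p.1} with hs
  have hsm : MeasurableSet s :=
    ((measurableSet_lt measurable_fst (measurable_fst.comp measurable_snd)).inter
      ((measurableSet_lt measurable_fst
          ((measurable_fst.comp measurable_snd).comp measurable_snd)).inter
        (measurableSet_lt measurable_fst
          ((measurable_snd.comp measurable_snd).comp measurable_snd))))
  have hAeq : {ω | V j ω > V i ω ∧ V k ω > V i ω ∧ V l ω > V i ω}
      = (fun ω => (V i ω, W ω)) ⁻¹' s := rfl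
  rw [hAeq, ← Measure.map_apply ((hmeas i).prodMk hWm) hsm, hmap,
    Measure.prod_apply hsm]
  refine lintegral_congr fun t => ?_
  have hslicem : MeasurableSet (Prod.mk t ⁻¹' s) := measurable_prodMk_left hsm
  rw [Measure.map_apply hWm hslicem]
  have hpre : W ⁻¹' (Prod.mk t ⁻¹' s)
      = ⋂ m ∈ ({j, k, l} : Finset (Fin 5)), {ω | V m ω > t} := by
    rw [Finset.set_biInter_insert, Finset.set_biInter_insert, Finset.set_biInter_singleton]
    rfl
  have hbi := hindep.meas_biInter (S := ({j, k, l} : Finset (Fin 5)))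
    (s := fun m => {ω | V m ω > t}) (fun m _ => ⟨Ioi t, measurableSet_Ioi, rfl⟩)
  rw [hpre, hbi]
  rw [Finset.prod_insert (by simp [hjk, hjl]), Finset.prod_insert (by simp [hkl]),
    Finset.prod_singleton, ← mul_assoc]

end Aux

/- STATEMENT 7 (Theorem 3.3(i)): with the notation of Model II, if γ₁ ≤ γ₂, X₁ ≤_st X₂ and
Y₂ ≤_st Y₁, then P(V₁ˢ > V₂ˢ) ≥ P(V₂ˢ > V₁ˢ), i.e. V₂ˢ ≤_sp V₁ˢ, where
P(V₁ˢ > V₂ˢ) = P(Y₁* > X₁, X₂ > X₁, H₁ > X₁) and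
P(V₂ˢ > V₁ˢ) = P(Y₂* > X₂, X₁ > X₂, H₁ > X₂), H₁ = min{X₃,…,Xₙ}, and Yᵢ* has survival
function F̄_{Yᵢ}(γᵢ(·)).  Here V : Fin 5 → Ω → ℝ collects the independent nonnegative
random variables V 0 = X₁, V 1 = X₂, V 2 = H₁, V 3 = Y₁*, V 4 = Y₂*. -/
theorem model_II_series_sp_st
    (Ω : Type*) [MeasurableSpace Ω] (P : Measure Ω) [IsProbabilityMeasure P]
    (V : Fin 5 → Ω → ℝ)
    (hmeas : ∀ i, Measurable (V i))
    (hnonneg : ∀ i, ∀ ω, 0 ≤ V i ω)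
    (hindep : iIndepFun V P)
    (SY1 SY2 : ℝ → ℝ) (γ1 γ2 : ℝ → ℝ)
    -- survival functions of Y₁, Y₂ and model functions γ₁, γ₂
    (hSY1_anti : Antitone SY1) (hSY2_anti : Antitone SY2)
    (hSY1_bd : ∀ u, 0 ≤ SY1 u ∧ SY1 u ≤ 1) (hSY2_bd : ∀ u, 0 ≤ SY2 u ∧ SY2 u ≤ 1)
    (hγ1_mono : MonotoneOn γ1 (Set.Ici 0)) (hγ2_mono : MonotoneOn γ2 (Set.Ici 0))
    (hγ1_bd : ∀ u ≥ 0, 0 ≤ γ1 u ∧ γ1 u ≤ u) (hγ2_bd : ∀ u ≥ 0, 0 ≤ γ2 u ∧ γ2 u ≤ u)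
    -- Y₁*, Y₂* have survival functions F̄_{Y₁}(γ₁(·)), F̄_{Y₂}(γ₂(·))
    (hY1star : ∀ t ≥ 0, P {ω | V 3 ω > t} = ENNReal.ofReal (SY1 (γ1 t)))
    (hY2star : ∀ t ≥ 0, P {ω | V 4 ω > t} = ENNReal.ofReal (SY2 (γ2 t)))
    -- γ₁ ≤ γ₂, X₁ ≤_st X₂ and Y₂ ≤_st Y₁
    (hγle : ∀ u ≥ 0, γ1 u ≤ γ2 u)
    (hstX : ∀ t : ℝ, P {ω | V 0 ω > t} ≤ P {ω | V 1 ω > t})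
    (hstY : ∀ u, SY2 u ≤ SY1 u) :
    -- conclusion: P(V₂ˢ > V₁ˢ) ≤ P(V₁ˢ > V₂ˢ)
    P {ω | V 4 ω > V 1 ω ∧ V 0 ω > V 1 ω ∧ V 2 ω > V 1 ω} ≤
    P {ω | V 3 ω > V 0 ω ∧ V 1 ω > V 0 ω ∧ V 2 ω > V 0 ω} := by
  classical
  open Set in
  have hpm : ∀ i : Fin 5, IsProbabilityMeasure (P.map (V i)) :=
    fun i => Measure.isProbabilityMeasure_map (hmeas i).aemeasurable
  haveI := hpm 0; haveI := hpm 1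
  set μ0 := P.map (V 0) with hμ0
  set μ1 := P.map (V 1) with hμ1
  set f : Fin 5 → ℝ → ENNReal := fun i t => P {ω | V i ω > t} with hf
  have hmapIoi : ∀ (i : Fin 5) (t : ℝ), (P.map (V i)) (Set.Ioi t) = f i t := by
    intro i t
    rw [Measure.map_apply (hmeas i) measurableSet_Ioi]; rfl
  have hanti : ∀ i, Antitone (f i) := fun i t t' htt' =>
    measure_mono (fun ω hω => lt_of_le_of_lt htt' hω)
  have hfm : ∀ i, Measurable (f i) := fun i => (hanti i).measurable
  have hbd1 : ∀ i t, f i t ≤ 1 := fun i t => prob_le_one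
  have h43 : ∀ t, f 4 t ≤ f 3 t := by
    intro t
    rcases le_or_gt 0 t with ht | ht
    · show P {ω | V 4 ω > t} ≤ P {ω | V 3 ω > t}
      rw [hY1star t ht, hY2star t ht]
      exact ENNReal.ofReal_le_ofReal ((hstY _).trans (hSY1_anti (hγle t ht)))
    · show P {ω | V 4 ω > t} ≤ P {ω | V 3 ω > t}
      have h3 : {ω | V 3 ω > t} = Set.univ :=
        Set.eq_univ_of_forall fun ω => lt_of_lt_of_le ht (hnonneg 3 ω)
      have h4 : {ω | V 4 ω > t} = Set.univ :=
        Set.eq_univ_of_forall fun ω => lt_of_lt_of_le ht (hnonneg 4 ω)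
      rw [h3, h4]
  set g : ℝ → ENNReal := fun t => f 3 t * f 2 t with hg
  have hgm : Measurable g := (hfm 3).mul (hfm 2)
  have hganti : Antitone g := fun t t' h => mul_le_mul' (hanti 3 h) (hanti 2 h)
  have hgbd : ∀ t, g t ≤ 1 := fun t =>
    le_trans (mul_le_mul' (hbd1 3 t) (hbd1 2 t)) (by simp)
  have hst01 : ∀ t, μ0 (Set.Ioi t) ≤ μ1 (Set.Ioi t) := by
    intro t; rw [hμ0, hμ1, hmapIoi 0 t, hmapIoi 1 t]; exact hstX t
  have hA : P {ω | V 4 ω > V 1 ω ∧ V 0 ω > V 1 ω ∧ V 2 ω > V 1 ω}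
      = ∫⁻ t, f 4 t * f 0 t * f 2 t ∂μ1 :=
    aux_repr P V hmeas hindep 1 4 0 2 (by decide) (by decide) (by decide)
      (by decide) (by decide) (by decide)
  have hB : P {ω | V 3 ω > V 0 ω ∧ V 1 ω > V 0 ω ∧ V 2 ω > V 0 ω}
      = ∫⁻ t, f 3 t * f 1 t * f 2 t ∂μ0 :=
    aux_repr P V hmeas hindep 0 3 1 2 (by decide) (by decide) (by decide)
      (by decide) (by decide) (by decide)
  set b : ℝ → ENNReal := fun y => ∫⁻ x in Set.Iio y, g x ∂μ1 with hb
  have hbmono : Monotone b := fun y y' h =>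
    lintegral_mono_set (Set.Iio_subset_Iio h)
  have hbbd : ∀ y, b y ≤ 1 := by
    intro y
    calc b y ≤ ∫⁻ _ in Set.Iio y, 1 ∂μ1 := lintegral_mono fun x => hgbd x
      _ = μ1 (Set.Iio y) := by rw [setLIntegral_one]
      _ ≤ 1 := prob_le_one
  set a : ℝ → ENNReal := fun t => g t * μ1 (Set.Ioi t) with haa
  have haanti : Antitone a := fun t t' h =>
    mul_le_mul' (hganti h) (measure_mono (Set.Ioi_subset_Ioi h))
  have habd : ∀ t, a t ≤ 1 := fun t =>
    le_trans (mul_le_mul' (hgbd t) prob_le_one) (by simp)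
  calc P {ω | V 4 ω > V 1 ω ∧ V 0 ω > V 1 ω ∧ V 2 ω > V 1 ω}
      = ∫⁻ t, f 4 t * f 0 t * f 2 t ∂μ1 := hA
    _ ≤ ∫⁻ t, g t * μ0 (Set.Ioi t) ∂μ1 := by
        refine lintegral_mono fun t => ?_
        calc f 4 t * f 0 t * f 2 t
            ≤ f 3 t * f 0 t * f 2 t :=
              mul_le_mul_left (mul_le_mul_left (h43 t) _) _
          _ = f 3 t * f 2 t * f 0 t := by rw [mul_right_comm]
          _ = g t * μ0 (Set.Ioi t) := by rw [hμ0, hmapIoi 0 t]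
    _ = ∫⁻ y, b y ∂μ0 := aux_swap μ1 μ0 g hgm
    _ ≤ ∫⁻ y, b y ∂μ1 := aux_st_mono μ0 μ1 hst01 b hbmono hbbd
    _ = ∫⁻ t, a t ∂μ1 := (aux_swap μ1 μ1 g hgm).symm
    _ ≤ ∫⁻ t, a t ∂μ0 := aux_st_anti μ0 μ1 hst01 a haanti habd
    _ = ∫⁻ t, f 3 t * f 1 t * f 2 t ∂μ0 := by
        refine lintegral_congr fun t => ?_
        calc a t = g t * μ1 (Set.Ioi t) := rfl
          _ = f 3 t * f 2 t * f 1 t := by rw [hμ1, hmapIoi 1 t]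
          _ = f 3 t * f 1 t * f 2 t := by rw [mul_right_comm]
    _ = P {ω | V 3 ω > V 0 ω ∧ V 1 ω > V 0 ω ∧ V 2 ω > V 0 ω} := hB.symm
end

section
/- If X₁ ≤_icv X₂, Y₂* ≤_icv Y₁*, and Y₂*, X₁, X₃, ..., Xₙ (or Y₁*, X₂, X₃, ..., Xₙ) have convex survival functions, then V₂^s ≤_sp V₁^s, i.e., P(V₁^s > V₂^s) ≥ P(V₂^s > V₁^s), where P(V₁^s > V₂^s) = P(Y₁* > X₁, X₂ > X₁, H₁ > X₁), P(V₂^s > V₁^s) = P(Y₂* > X₂, X₁ > X₂, H₁ > X₂), and H₁ = min{X₃,...,Xₙ}. -/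
open MeasureTheory ProbabilityTheory

/- STATEMENT 8 (Theorem 3.3(ii)): if X₁ ≤_icv X₂, Y₂* ≤_icv Y₁*, and Y₂*, X₁, X₃,…,Xₙ
(or Y₁*, X₂, X₃,…,Xₙ) have convex survival functions, then V₂ˢ ≤_sp V₁ˢ, i.e.
P(V₂ˢ > V₁ˢ) ≤ P(V₁ˢ > V₂ˢ), where P(V₁ˢ > V₂ˢ) = P(Y₁* > X₁, X₂ > X₁, H₁ > X₁),
P(V₂ˢ > V₁ˢ) = P(Y₂* > X₂, X₁ > X₂, H₁ > X₂) and H₁ = min{X₃,…,Xₙ}.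
V : Fin 5 → Ω → ℝ collects the independent nonnegative random variables
V 0 = X₁, V 1 = X₂, V 2 = H₁, V 3 = Y₁*, V 4 = Y₂*; the survival function of V i is
surv i : t ↦ P(V i > t); X ≤_icv Y means E[ξ(X)] ≤ E[ξ(Y)] for all increasing concave ξ. -/
open Set Filter Topology

namespace SP8

noncomputable def sf (μ : Measure ℝ) (t : ℝ) : ℝ := (μ (Set.Ioi t)).toReal

noncomputable def GG (μ : Measure ℝ) (q : ℝ → ℝ) (y : ℝ) : ℝ := ∫ t in Set.Iio y, q t ∂μ

lemma sf_anti (μ : Measure ℝ) [IsFiniteMeasure μ] : Antitone (sf μ) := fun _ _ hst =>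
  ENNReal.toReal_mono (measure_ne_top μ _) (measure_mono (Ioi_subset_Ioi hst))

lemma sf_meas (μ : Measure ℝ) [IsFiniteMeasure μ] : Measurable (sf μ) :=
  (sf_anti μ).measurable

lemma sf_nonneg (μ : Measure ℝ) (t : ℝ) : 0 ≤ sf μ t := ENNReal.toReal_nonneg

lemma sf_le_one (μ : Measure ℝ) [IsProbabilityMeasure μ] (t : ℝ) : sf μ t ≤ 1 := by
  have h : μ (Ioi t) ≤ 1 := prob_le_one
  simpa [sf] using ENNReal.toReal_mono ENNReal.one_ne_top h

lemma anti_mul {f g : ℝ → ℝ} (hf : Antitone f) (hg : Antitone g)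
    (hf0 : ∀ x, 0 ≤ f x) (hg0 : ∀ x, 0 ≤ g x) : Antitone (fun x => f x * g x) :=
  fun x y hxy => mul_le_mul (hf hxy) (hg hxy) (hg0 y) (hf0 x)






lemma integrable_of_bdd {μ : Measure ℝ} [IsFiniteMeasure μ] {q : ℝ → ℝ} (hq : Measurable q)
    (h0 : ∀ t, 0 ≤ q t) (h1 : ∀ t, q t ≤ 1) : Integrable q μ :=
  Integrable.mono' (integrable_const 1) hq.aestronglyMeasurable
    (Filter.Eventually.of_forall fun t => by
      rw [Real.norm_eq_abs, abs_of_nonneg (h0 t)]; exact h1 t)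

lemma GG_mono {μ : Measure ℝ} [IsFiniteMeasure μ] {q : ℝ → ℝ} (hq : Measurable q)
    (h0 : ∀ t, 0 ≤ q t) (h1 : ∀ t, q t ≤ 1) : Monotone (GG μ q) := by
  intro y y' h
  exact setIntegral_mono_set ((integrable_of_bdd hq h0 h1).integrableOn)
    (Filter.Eventually.of_forall fun t => h0 t)
    (HasSubset.Subset.eventuallyLE (Iio_subset_Iio h))

lemma GG_nonneg {μ : Measure ℝ} {q : ℝ → ℝ} (h0 : ∀ t, 0 ≤ q t) (y : ℝ) :
    0 ≤ GG μ q y :=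
  setIntegral_nonneg measurableSet_Iio fun t _ => h0 t

lemma GG_le_one {μ : Measure ℝ} [IsProbabilityMeasure μ] {q : ℝ → ℝ} (hq : Measurable q)
    (h0 : ∀ t, 0 ≤ q t) (h1 : ∀ t, q t ≤ 1) (y : ℝ) : GG μ q y ≤ 1 := by
  have h2 : GG μ q y ≤ ∫ t in Set.Iio y, (1:ℝ) ∂μ := by
    apply integral_mono ((integrable_of_bdd hq h0 h1).integrableOn) (integrable_const 1)
    intro t; exact h1 t
  rw [integral_const] at h2
  have h3 : (μ.restrict (Iio y) univ).toReal ≤ 1 := by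
    rw [Measure.restrict_apply_univ]
    simpa using ENNReal.toReal_mono ENNReal.one_ne_top (prob_le_one (μ := μ) (s := Iio y))
  simp only [smul_eq_mul, mul_one] at h2
  have h3' : (μ.restrict (Iio y)).real univ ≤ 1 := h3
  linarith

lemma lint_Iio_ne_top {μ : Measure ℝ} [IsProbabilityMeasure μ] {q : ℝ → ℝ}
    (h1 : ∀ t, q t ≤ 1) (y : ℝ) : (∫⁻ t in Set.Iio y, ENNReal.ofReal (q t) ∂μ) ≠ ⊤ := by
  have : (∫⁻ t in Set.Iio y, ENNReal.ofReal (q t) ∂μ) ≤ ∫⁻ _ in Set.Iio y, 1 ∂μ :=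
    lintegral_mono fun t => ENNReal.ofReal_le_one.mpr (h1 t)
  rw [lintegral_one, Measure.restrict_apply_univ] at this
  exact (this.trans_lt (measure_lt_top μ _)).ne

lemma GG_eq_lintegral {μ : Measure ℝ} {q : ℝ → ℝ} (hq : Measurable q) (h0 : ∀ t, 0 ≤ q t)
    (y : ℝ) : GG μ q y = (∫⁻ t in Set.Iio y, ENNReal.ofReal (q t) ∂μ).toReal := by
  rw [GG, integral_eq_lintegral_of_nonneg_ae (Filter.Eventually.of_forall fun t => h0 t)
    hq.aestronglyMeasurable]

lemma fubini_surv (μ ν : Measure ℝ) [IsProbabilityMeasure μ] [IsProbabilityMeasure ν]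
    {q : ℝ → ℝ} (hq : Measurable q) (h0 : ∀ t, 0 ≤ q t) (h1 : ∀ t, q t ≤ 1) :
    ∫ t, q t * sf ν t ∂μ = ∫ y, GG μ q y ∂ν := by
  have hsfa : Antitone (sf ν) := fun a b hab => ENNReal.toReal_mono (measure_ne_top ν _)
      (measure_mono (Ioi_subset_Ioi hab))
  have hsfm : Measurable (sf ν) := hsfa.measurable
  -- key lintegral identity
  set F : ℝ → ℝ → ENNReal := fun t y => (Set.Ioi t).indicator (fun _ => ENNReal.ofReal (q t)) y
    with hF
  have hFunc : Function.uncurry F =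
      Set.indicator {p : ℝ × ℝ | p.1 < p.2} (fun p => ENNReal.ofReal (q p.1)) := by
    funext p
    by_cases h : p.1 < p.2
    · simp [hF, Function.uncurry, Set.indicator_of_mem, h, Set.mem_Ioi]
    · simp [hF, Function.uncurry, Set.indicator_of_notMem, h, Set.mem_Ioi]
  have hFmeas : AEMeasurable (Function.uncurry F) (μ.prod ν) := by
    rw [hFunc]
    exact ((ENNReal.measurable_ofReal.comp (hq.comp measurable_fst)).indicator
      (measurableSet_lt measurable_fst measurable_snd)).aemeasurable
  have hinner1 : ∀ t, ∫⁻ y, F t y ∂ν = ENNReal.ofReal (q t) * ν (Set.Ioi t) := by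
    intro t
    rw [hF]
    rw [lintegral_indicator measurableSet_Ioi, setLIntegral_const]
  have hinner2 : ∀ y, ∫⁻ t, F t y ∂μ = ∫⁻ t in Set.Iio y, ENNReal.ofReal (q t) ∂μ := by
    intro y
    have : (fun t => F t y) = Set.indicator (Set.Iio y) (fun t => ENNReal.ofReal (q t)) := by
      funext t
      by_cases h : t < y
      · simp [hF, Set.indicator_of_mem, h, Set.mem_Ioi, Set.mem_Iio]
      · simp [hF, Set.indicator_of_notMem, h, Set.mem_Ioi, Set.mem_Iio]
    rw [this, lintegral_indicator measurableSet_Iio]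
  have hswap : ∫⁻ t, ENNReal.ofReal (q t) * ν (Set.Ioi t) ∂μ
      = ∫⁻ y, ∫⁻ t in Set.Iio y, ENNReal.ofReal (q t) ∂μ ∂ν := by
    calc ∫⁻ t, ENNReal.ofReal (q t) * ν (Set.Ioi t) ∂μ
        = ∫⁻ t, ∫⁻ y, F t y ∂ν ∂μ := by
          refine lintegral_congr fun t => (hinner1 t).symm
      _ = ∫⁻ y, ∫⁻ t, F t y ∂μ ∂ν := lintegral_lintegral_swap hFmeas
      _ = _ := lintegral_congr fun y => hinner2 y
  -- convert LHS
  have hLHS : ∫ t, q t * sf ν t ∂μ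
      = (∫⁻ t, ENNReal.ofReal (q t) * ν (Set.Ioi t) ∂μ).toReal := by
    simp only [sf]
    rw [integral_eq_lintegral_of_nonneg_ae
      (Filter.Eventually.of_forall fun t => mul_nonneg (h0 t) ENNReal.toReal_nonneg)
      ((hq.mul hsfm).aestronglyMeasurable)]
    congr 1
    refine lintegral_congr fun t => ?_
    rw [ENNReal.ofReal_mul (h0 t), ENNReal.ofReal_toReal (measure_ne_top ν _)]
  -- convert RHS
  have hGmono : Monotone (GG μ q) := GG_mono hq h0 h1
  have hRHS : ∫ y, GG μ q y ∂ν
      = (∫⁻ y, ∫⁻ t in Set.Iio y, ENNReal.ofReal (q t) ∂μ ∂ν).toReal := by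
    rw [integral_eq_lintegral_of_nonneg_ae
      (Filter.Eventually.of_forall fun y => GG_nonneg h0 y)
      hGmono.measurable.aestronglyMeasurable]
    congr 1
    refine lintegral_congr fun y => ?_
    rw [GG_eq_lintegral hq h0, ENNReal.ofReal_toReal (lint_Iio_ne_top h1 y)]
  rw [hLHS, hRHS, hswap]







variable {μ : Measure ℝ} {q : ℝ → ℝ}

-- measure of Ioc as sf difference (copied logic)
lemma sf_Ioc' (μ : Measure ℝ) [IsFiniteMeasure μ] {a b : ℝ} (hab : a ≤ b) :
    (μ (Ioc a b)).toReal = sf μ a - sf μ b := by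
  have h : Ioc a b ∪ Ioi b = Ioi a := Ioc_union_Ioi_eq_Ioi hab
  have hd : Disjoint (Ioc a b) (Ioi b) := Ioc_disjoint_Ioi le_rfl
  have hu := measure_union (μ := μ) hd measurableSet_Ioi
  rw [h] at hu
  rw [sf, sf, hu, ENNReal.toReal_add (measure_ne_top μ _) (measure_ne_top μ _)]
  ring

lemma atomfree (μ : Measure ℝ) [IsProbabilityMeasure μ]
    (hconv : ConvexOn ℝ (Ici 0) (sf μ)) {y : ℝ} (hy : 0 < y) : μ {y} = 0 := by
  by_contra hne
  have hJpos : 0 < (μ {y}).toReal := ENNReal.toReal_pos hne (measure_ne_top μ _)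
  set J : ℝ := (μ {y}).toReal with hJdef
  have hJle : ∀ w : ℝ, w < y → J ≤ sf μ w - sf μ y := by
    intro w hwy
    rw [← sf_Ioc' μ hwy.le]
    exact ENNReal.toReal_mono (measure_ne_top μ _)
      (measure_mono (singleton_subset_iff.mpr ⟨hwy, le_rfl⟩))
  set η : ℝ := min (y/4) (J*y/8) with hηdef
  have hη : 0 < η := lt_min (by linarith) (by positivity)
  have hη1 : η ≤ y/4 := min_le_left _ _
  have hη2 : η ≤ J*y/8 := min_le_right _ _
  set w : ℝ := y - η with hwdef
  have hxw : y/2 < w := by simp only [hwdef]; linarith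
  have hwy : w < y := by simp only [hwdef]; linarith
  have hslope := hconv.slope_mono_adjacent (x := y/2) (y := w) (z := y)
    (by simp; linarith) (by simp; linarith) hxw hwy
  have hA : sf μ (y/2) ≤ 1 := by
    have h := prob_le_one (μ := μ) (s := Ioi (y/2))
    simpa [sf] using ENNReal.toReal_mono ENNReal.one_ne_top h
  have hB0 : 0 ≤ sf μ w := ENNReal.toReal_nonneg
  have hCB : sf μ y - sf μ w ≤ -J := by have := hJle w hwy; linarith
  have hd1 : (0:ℝ) < w - y/2 := by linarith
  have hd2 : (0:ℝ) < y - w := by linarith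
  rw [div_le_div_iff₀ hd1 hd2] at hslope
  nlinarith [mul_le_mul_of_nonneg_right hCB hd1.le, mul_le_mul_of_nonneg_left hη2 hJpos.le]

-- measure of Ioo 0 y in terms of sf
lemma mOo (μ : Measure ℝ) [IsProbabilityMeasure μ]
    (hconv : ConvexOn ℝ (Ici 0) (sf μ)) {y : ℝ} (hy : 0 < y) :
    (μ (Ioo 0 y)).toReal = sf μ 0 - sf μ y := by
  have hIci : μ (Ici y) = μ (Ioi y) := by
    apply le_antisymm
    · have h1 : Ici y = {y} ∪ Ioi y := by
        ext z; simp [le_iff_lt_or_eq, eq_comm, or_comm]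
      rw [h1]
      calc μ ({y} ∪ Ioi y) ≤ μ {y} + μ (Ioi y) := measure_union_le _ _
        _ = μ (Ioi y) := by rw [atomfree μ hconv hy, zero_add]
    · exact measure_mono Ioi_subset_Ici_self
  have hsplit : Ioi 0 = Ioo 0 y ∪ Ici y := by
    ext z; simp only [mem_Ioi, mem_union, mem_Ioo, mem_Ici]
    constructor
    · intro h; rcases lt_or_ge z y with h2 | h2
      · exact Or.inl ⟨h, h2⟩
      · exact Or.inr h2
    · rintro (⟨h, _⟩ | h) ; exact h; linarith
  have hd : Disjoint (Ioo 0 y) (Ici y) := by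
    apply disjoint_left.mpr; rintro z ⟨_, h2⟩ h3
    exact absurd h3 (not_le.mpr h2)
  have hu := measure_union (μ := μ) hd measurableSet_Ici
  rw [← hsplit, hIci] at hu
  have := ENNReal.toReal_add (a := μ (Ioo 0 y)) (b := μ (Ioi y))
    (measure_ne_top μ _) (measure_ne_top μ _)
  have h2 : (μ (Ioi 0)).toReal = (μ (Ioo 0 y)).toReal + (μ (Ioi y)).toReal := by
    rw [hu, this]
  simp only [sf]
  linarith

-- key min formula
lemma inter_min (μ : Measure ℝ) (hqa : Antitone q) (y : ℝ) (u : ℝ) :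
    μ ({t | u < q t} ∩ Ioo 0 y) = min (μ (Ioo 0 y)) (μ ({t | u < q t} ∩ Ioi 0)) := by
  by_cases h : Ioo 0 y ⊆ {t | u < q t}
  · rw [inter_eq_self_of_subset_right h, min_eq_left]
    exact measure_mono (fun t ht => ⟨h ht, ht.1⟩)
  · rw [not_subset] at h
    obtain ⟨t₀, ht₀, ht₀q⟩ := h
    simp only [Set.mem_setOf_eq, not_lt] at ht₀q
    have hsub : {t | u < q t} ∩ Ioi 0 ⊆ Ioo 0 y := by
      rintro t ⟨htq, ht0⟩
      refine ⟨ht0, ?_⟩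
      by_contra hty
      push_neg at hty
      have h1 : t₀ ≤ t := le_trans ht₀.2.le hty
      have h2 : q t ≤ q t₀ := hqa h1
      rw [Set.mem_setOf_eq] at htq
      linarith
    have heq : {t | u < q t} ∩ Ioo 0 y = {t | u < q t} ∩ Ioi 0 := by
      apply le_antisymm
      · rintro t ⟨h1, h2⟩; exact ⟨h1, h2.1⟩
      · intro t ht; exact ⟨ht.1, hsub ht⟩
    rw [heq, min_eq_right (measure_mono hsub)]

lemma GloOo_ne_top [IsProbabilityMeasure μ] {w : ℝ} (h1 : ∀ t, q t ≤ 1) :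
    (∫⁻ t in Ioo 0 w, ENNReal.ofReal (q t) ∂μ) ≠ ⊤ := by
  have : (∫⁻ t in Ioo 0 w, ENNReal.ofReal (q t) ∂μ) ≤ ∫⁻ _ in Ioo 0 w, 1 ∂μ :=
    lintegral_mono fun t => ENNReal.ofReal_le_one.mpr (h1 t)
  rw [lintegral_one, Measure.restrict_apply_univ] at this
  exact (this.trans_lt (measure_lt_top μ _)).ne

lemma Glo_rep (μ : Measure ℝ) [IsProbabilityMeasure μ] (hq : Measurable q)
    (h0 : ∀ t, 0 ≤ q t) {w : ℝ} :
    ∫⁻ t in Ioo 0 w, ENNReal.ofReal (q t) ∂μ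
      = ∫⁻ u in Ioi (0:ℝ), μ ({t | u < q t} ∩ Ioo 0 w) := by
  rw [lintegral_eq_lintegral_meas_lt (μ.restrict (Ioo 0 w))
    (Filter.Eventually.of_forall h0) hq.aemeasurable]
  refine lintegral_congr fun u => ?_
  rw [Measure.restrict_apply (measurableSet_lt measurable_const hq)]

lemma GG_concave (μ : Measure ℝ) [IsProbabilityMeasure μ]
    (hconv : ConvexOn ℝ (Ici 0) (sf μ)) (hq : Measurable q) (hqa : Antitone q)
    (h0 : ∀ t, 0 ≤ q t) (h1 : ∀ t, q t ≤ 1) :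
    ConcaveOn ℝ (Ioi 0) (GG μ q) := by
  have hqint : Integrable q μ :=
    Integrable.mono' (integrable_const 1) hq.aestronglyMeasurable
      (Filter.Eventually.of_forall fun t => by
        rw [Real.norm_eq_abs, abs_of_nonneg (h0 t)]; exact h1 t)
  -- m and its concavity
  set m : ℝ → ℝ := fun w => sf μ 0 - sf μ w with hm
  have hmconc : ConcaveOn ℝ (Ici 0) m := by
    have h := (hconv.neg).add_const (sf μ 0)
    have : ((-sf μ) + fun _ => sf μ 0) = m := by
      funext w; simp [hm]; ring
    rwa [this] at h
  have hmnn : ∀ w, 0 ≤ w → 0 ≤ m w := by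
    intro w h
    have : sf μ w ≤ sf μ 0 := ENNReal.toReal_mono (measure_ne_top μ _)
      (measure_mono (Ioi_subset_Ioi h))
    simp only [hm]; linarith
  constructor
  · exact convex_Ioi 0
  intro x hx y hy a b ha hb hab
  simp only [smul_eq_mul]
  rw [mem_Ioi] at hx hy
  set z := a * x + b * y with hz
  have hzpos : 0 < z := by
    have h1 : a * min x y + b * min x y ≤ a * x + b * y := by
      gcongr
      · exact min_le_left _ _
      · exact min_le_right _ _
    have h2 : a * min x y + b * min x y = min x y := by rw [← add_mul, hab, one_mul]
    have h3 : 0 < min x y := lt_min hx hy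
    rw [hz]; linarith
  have hdecomp : ∀ w : ℝ, 0 < w →
      GG μ q w = (∫ t in Iic 0, q t ∂μ) + ∫ t in Ioo 0 w, q t ∂μ := by
    intro w hw
    have hset : Iio w = Iic 0 ∪ Ioo 0 w := by
      ext t; simp only [mem_Iio, mem_union, mem_Iic, mem_Ioo]
      constructor
      · intro h; rcases le_or_gt t 0 with h2 | h2
        · exact Or.inl h2
        · exact Or.inr ⟨h2, h⟩
      · rintro (h | ⟨_, h⟩)
        · linarith
        · exact h
    have hd : Disjoint (Iic 0) (Ioo 0 w) := by
      rw [disjoint_left]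
      rintro t h1 ⟨h2, _⟩
      rw [mem_Iic] at h1
      linarith
    rw [GG, hset, setIntegral_union hd measurableSet_Ioo hqint.integrableOn hqint.integrableOn]
  set Glo : ℝ → ENNReal := fun w => ∫⁻ t in Ioo 0 w, ENNReal.ofReal (q t) ∂μ with hGlo
  have hGul : ∀ w, (∫ t in Ioo 0 w, q t ∂μ) = (Glo w).toReal := fun w => by
    rw [integral_eq_lintegral_of_nonneg_ae (Filter.Eventually.of_forall h0)
      hq.aestronglyMeasurable]
  have hmeasu : ∀ w : ℝ, Measurable (fun u : ℝ => μ ({t | u < q t} ∩ Ioo 0 w)) := by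
    intro w
    apply Antitone.measurable
    intro u u' huu'
    exact measure_mono (inter_subset_inter_left _
      (fun t ht => lt_of_le_of_lt huu' ht))
  have hMw : ∀ w, 0 < w → μ (Ioo 0 w) = ENNReal.ofReal (m w) := by
    intro w hw
    show μ (Ioo 0 w) = ENNReal.ofReal (sf μ 0 - sf μ w)
    rw [← mOo μ hconv hw, ENNReal.ofReal_toReal (measure_ne_top μ _)]
  have key : ENNReal.ofReal a * Glo x + ENNReal.ofReal b * Glo y ≤ Glo z := by
    rw [hGlo]
    simp only
    rw [Glo_rep μ hq h0, Glo_rep μ hq h0, Glo_rep μ hq h0,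
      ← lintegral_const_mul _ (hmeasu x), ← lintegral_const_mul _ (hmeasu y),
      ← lintegral_add_left ((hmeasu x).const_mul _)]
    refine lintegral_mono fun u => ?_
    rw [inter_min μ hqa x u, inter_min μ hqa y u, inter_min μ hqa z u]
    set C := μ ({t | u < q t} ∩ Ioi 0) with hC
    refine le_min ?_ ?_
    · calc ENNReal.ofReal a * min (μ (Ioo 0 x)) C + ENNReal.ofReal b * min (μ (Ioo 0 y)) C
          ≤ ENNReal.ofReal a * μ (Ioo 0 x) + ENNReal.ofReal b * μ (Ioo 0 y) := by
            gcongr <;> exact min_le_left _ _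
        _ = ENNReal.ofReal (a * m x + b * m y) := by
            rw [hMw x hx, hMw y hy, ← ENNReal.ofReal_mul ha, ← ENNReal.ofReal_mul hb,
              ← ENNReal.ofReal_add (mul_nonneg ha (hmnn x hx.le))
                (mul_nonneg hb (hmnn y hy.le))]
        _ ≤ ENNReal.ofReal (m z) := by
            apply ENNReal.ofReal_le_ofReal
            have hcc := hmconc.2 (mem_Ici.mpr hx.le) (mem_Ici.mpr hy.le) ha hb hab
            simpa [smul_eq_mul] using hcc
        _ = μ (Ioo 0 z) := (hMw z hzpos).symm
    · calc ENNReal.ofReal a * min (μ (Ioo 0 x)) C + ENNReal.ofReal b * min (μ (Ioo 0 y)) C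
          ≤ ENNReal.ofReal a * C + ENNReal.ofReal b * C := by
            gcongr <;> exact min_le_right _ _
        _ = (ENNReal.ofReal a + ENNReal.ofReal b) * C := by rw [add_mul]
        _ = C := by rw [← ENNReal.ofReal_add ha hb, hab, ENNReal.ofReal_one, one_mul]
  have hfin : ∀ w : ℝ, Glo w ≠ ⊤ := fun w => GloOo_ne_top h1
  have hTR : (ENNReal.ofReal a * Glo x + ENNReal.ofReal b * Glo y).toReal
      = a * (Glo x).toReal + b * (Glo y).toReal := by
    rw [ENNReal.toReal_add (ENNReal.mul_ne_top ENNReal.ofReal_ne_top (hfin x))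
      (ENNReal.mul_ne_top ENNReal.ofReal_ne_top (hfin y)),
      ENNReal.toReal_mul, ENNReal.toReal_mul, ENNReal.toReal_ofReal ha,
      ENNReal.toReal_ofReal hb]
  have hle := ENNReal.toReal_mono (hfin z) key
  rw [hTR] at hle
  rw [hdecomp x hx, hdecomp y hy, hdecomp z hzpos, hGul x, hGul y, hGul z]
  set c := ∫ t in Iic 0, q t ∂μ with hcdef
  have hexp : a * (c + (Glo x).toReal) + b * (c + (Glo y).toReal)
      = (a + b) * c + (a * (Glo x).toReal + b * (Glo y).toReal) := by ring
  rw [hexp, hab, one_mul]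
  linarith



lemma icv_compare
    {Ω : Type*} [MeasurableSpace Ω] (P : Measure Ω) [IsProbabilityMeasure P]
    (A B : Ω → ℝ) (hA : Measurable A) (hB : Measurable B)
    (hA0 : ∀ ω, 0 ≤ A ω) (hB0 : ∀ ω, 0 ≤ B ω)
    (hicv : ∀ ξ : ℝ → ℝ, Monotone ξ → ConcaveOn ℝ Set.univ ξ →
        Integrable (fun ω => ξ (A ω)) P → Integrable (fun ω => ξ (B ω)) P →
        ∫ ω, ξ (A ω) ∂P ≤ ∫ ω, ξ (B ω) ∂P)
    (g : ℝ → ℝ) (hg_mono : Monotone g)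
    (hg_conc : ConcaveOn ℝ (Set.Ioi 0) g)
    (hg_lb : ∀ x, 0 ≤ x → -1 ≤ g x) (hg_ub : ∀ x, 0 ≤ x → g x ≤ 1) :
    ∫ ω, g (A ω) ∂P ≤ ∫ ω, g (B ω) ∂P := by
  -- integrability of g ∘ A, g ∘ B
  have hbd : ∀ (C : Ω → ℝ), (∀ ω, 0 ≤ C ω) → ∀ ω, ‖g (C ω)‖ ≤ 1 := by
    intro C hC ω
    rw [Real.norm_eq_abs, abs_le]
    exact ⟨hg_lb _ (hC ω), hg_ub _ (hC ω)⟩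
  have hgA_int : Integrable (fun ω => g (A ω)) P :=
    Integrable.mono' (integrable_const 1)
      ((hg_mono.measurable.comp hA).aestronglyMeasurable)
      (Filter.Eventually.of_forall (hbd A hA0))
  -- the general chord inequality
  have chord : ∀ p r : ℝ, 0 < p → p < r → (g r - g p) * p ≤ (g p - g 0) * (r - p) := by
    intro p r hp hpr
    rcases le_or_gt (g r) (g p) with h | h
    · have h1 : (g r - g p) * p ≤ 0 := mul_nonpos_of_nonpos_of_nonneg (by linarith) hp.le
      have h2 : 0 ≤ (g p - g 0) * (r - p) :=
        mul_nonneg (by linarith [hg_mono hp.le]) (by linarith)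
      linarith
    · refine le_of_forall_pos_le_add fun c hc => ?_
      set d := min (p/2) (c / (g r - g p)) with hd
      have hdpos : 0 < d := lt_min (by linarith) (div_pos hc (by linarith))
      have hdp : d < p := lt_of_le_of_lt (min_le_left _ _) (by linarith)
      have hsl := hg_conc.slope_anti_adjacent (x := d) (y := p) (z := r)
        (mem_Ioi.mpr hdpos) (mem_Ioi.mpr (hp.trans hpr)) hdp hpr
      rw [div_le_div_iff₀ (by linarith) (by linarith)] at hsl
      -- hsl : (g r - g p) * (p - d) ≤ (g p - g d) * (r - p)
      have h5 : (g p - g d) * (r - p) ≤ (g p - g 0) * (r - p) :=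
        mul_le_mul_of_nonneg_right (by linarith [hg_mono hdpos.le]) (by linarith)
      have h3 : (g r - g p) * d ≤ c := by
        have hdle : d ≤ c / (g r - g p) := min_le_right _ _
        rw [le_div_iff₀ (by linarith)] at hdle
        linarith [hdle]
      have hexp : (g r - g p) * (p - d) = (g r - g p) * p - (g r - g p) * d := by ring
      linarith
  -- pick ε such that P(0 < A < ε) is small
  refine le_of_forall_pos_le_add fun δ hδ => ?_
  have hS : ∀ n : ℕ, MeasurableSet (A ⁻¹' Ioo 0 (1/(n+1) : ℝ)) :=
    fun n => hA measurableSet_Ioo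
  have hiInter : (⋂ n : ℕ, A ⁻¹' Ioo 0 (1/(n+1) : ℝ)) = ∅ := by
    rw [← Set.preimage_iInter]
    convert Set.preimage_empty
    rw [Set.eq_empty_iff_forall_notMem]
    intro x hx
    simp only [Set.mem_iInter, Set.mem_Ioo] at hx
    obtain ⟨n, hn⟩ := exists_nat_gt (1/x)
    have hx0 : 0 < x := (hx 0).1
    have h2 : (1:ℝ)/(n+1) < x := by
      rw [div_lt_iff₀ (by positivity)]
      rw [div_lt_iff₀ hx0] at hn
      nlinarith
    exact absurd (hx n).2 (not_lt.mpr h2.le)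
  have htend : Tendsto (fun n : ℕ => P (A ⁻¹' Ioo 0 (1/(n+1) : ℝ))) atTop (𝓝 0) := by
    have h := tendsto_measure_iInter_atTop (μ := P)
      (fun n => (hS n).nullMeasurableSet)
      (fun n m hnm => Set.preimage_mono (Set.Ioo_subset_Ioo le_rfl
        (by
          apply div_le_div_of_nonneg_left (by norm_num) (by positivity)
          exact_mod_cast (by linarith [(Nat.cast_le.mpr hnm : (n:ℝ) ≤ m)] : ((n:ℝ)+1) ≤ ((m:ℝ)+1)))))
      ⟨0, measure_ne_top P _⟩
    rw [hiInter] at h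
    simpa [Function.comp_def] using h
  have htendR : Tendsto (fun n : ℕ => (P (A ⁻¹' Ioo 0 (1/(n+1) : ℝ))).toReal) atTop (𝓝 0) := by
    have := (ENNReal.tendsto_toReal (by simp : (0:ENNReal) ≠ ⊤)).comp htend
    simpa [Function.comp_def] using this
  obtain ⟨n, hn⟩ := (htendR.eventually_lt_const (show (0:ℝ) < δ/4 by linarith)).exists
  set ε : ℝ := 1/(n+1) with hεdef
  have hε : 0 < ε := by positivity
  -- the piecewise affine minorant
  set s : ℝ := (g ε - g 0) / ε with hsdef
  have hs0 : 0 ≤ s := div_nonneg (by linarith [hg_mono hε.le]) hε.le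
  have hgε : g 0 + s * ε = g ε := by
    rw [hsdef, div_mul_cancel₀ _ hε.ne']; ring
  set ξ : ℝ → ℝ := fun x => if x ≤ ε then g 0 + s * x else g x with hξdef
  have claimC : ∀ z, ε < z → g z ≤ g 0 + s * z := by
    intro z hz
    have hch := chord ε z hε hz
    have h2 : g z * ε ≤ g 0 * ε + (g ε - g 0) * z := by nlinarith
    have h4 : s * z * ε = (g ε - g 0) * z := by
      rw [hsdef, mul_right_comm, div_mul_cancel₀ _ hε.ne']
    have h5 : (g 0 + s * z) * ε = g 0 * ε + s * z * ε := by ring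
    have h6 : g z * ε ≤ (g 0 + s * z) * ε := by linarith
    exact le_of_mul_le_mul_right h6 hε
  have hξ_eq_ge : ∀ x, ε ≤ x → ξ x = g x := by
    intro x hx
    rcases eq_or_lt_of_le hx with h | h
    · rw [hξdef]; simp only [← h, if_pos le_rfl]; exact hgε
    · rw [hξdef]; simp only [if_neg (not_le.mpr h)]
  have hξ_mono : Monotone ξ := by
    intro u v huv
    rw [hξdef]
    by_cases hu : u ≤ ε
    · by_cases hv : v ≤ ε
      · simp only [if_pos hu, if_pos hv]
        have := mul_le_mul_of_nonneg_left huv hs0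
        linarith
      · push_neg at hv
        simp only [if_pos hu, if_neg (not_le.mpr hv)]
        have h1 : g 0 + s * u ≤ g 0 + s * ε := by
          have := mul_le_mul_of_nonneg_left hu hs0; linarith
        rw [hgε] at h1
        exact h1.trans (hg_mono hv.le)
    · have hv : ¬ v ≤ ε := fun h => hu (huv.trans h)
      simp only [if_neg hu, if_neg hv]
      exact hg_mono huv
  have hξ_conc : ConcaveOn ℝ Set.univ ξ := by
    apply concaveOn_of_slope_anti_adjacent convex_univ
    intro x y z _ _ hxy hyz
    by_cases hzε : z ≤ ε
    · have hyε : y ≤ ε := (hyz.le).trans hzε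
      have hxε : x ≤ ε := (hxy.le).trans hyε
      rw [hξdef]
      simp only [if_pos hzε, if_pos hyε, if_pos hxε]
      have e1 : g 0 + s * z - (g 0 + s * y) = s * (z - y) := by ring
      have e2 : g 0 + s * y - (g 0 + s * x) = s * (y - x) := by ring
      rw [e1, e2, mul_div_cancel_right₀ s (by linarith : z - y ≠ 0),
        mul_div_cancel_right₀ s (by linarith : y - x ≠ 0)]
    · push_neg at hzε
      by_cases hyε : y ≤ ε
      · have hxε : x ≤ ε := (hxy.le).trans hyε
        have hξx : ξ x = g 0 + s * x := by rw [hξdef]; simp only [if_pos hxε]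
        have hξy : ξ y = g 0 + s * y := by rw [hξdef]; simp only [if_pos hyε]
        have hξz : ξ z = g z := by rw [hξdef]; simp only [if_neg (not_le.mpr hzε)]
        rw [hξx, hξy, hξz]
        have e2 : g 0 + s * y - (g 0 + s * x) = s * (y - x) := by ring
        rw [e2, mul_div_cancel_right₀ s (by linarith : y - x ≠ 0)]
        rw [div_le_iff₀ (by linarith : (0:ℝ) < z - y)]
        have := claimC z hzε
        nlinarith
      · push_neg at hyε
        have hξy : ξ y = g y := by rw [hξdef]; simp only [if_neg (not_le.mpr hyε)]
        have hξz : ξ z = g z := by rw [hξdef]; simp only [if_neg (not_le.mpr hzε)]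
        rw [hξy, hξz]
        have hy0 : (0:ℝ) < y := hε.trans hyε
        by_cases hxε : x ≤ ε
        · have hξx : ξ x = g 0 + s * x := by rw [hξdef]; simp only [if_pos hxε]
          rw [hξx]
          have h1 := hg_conc.slope_anti_adjacent (x := ε) (y := y) (z := z)
            (mem_Ioi.mpr hε) (mem_Ioi.mpr (hy0.trans hyz)) hyε hyz
          refine h1.trans ?_
          rw [div_le_div_iff₀ (by linarith : (0:ℝ) < y - ε) (by linarith : (0:ℝ) < y - x)]
          have hCy := claimC y hyε
          have hprod : 0 ≤ (ε - x) * ((g 0 + s * y) - g y) :=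
            mul_nonneg (by linarith) (by linarith)
          nlinarith [hgε]
        · push_neg at hxε
          have hξx : ξ x = g x := by rw [hξdef]; simp only [if_neg (not_le.mpr hxε)]
          rw [hξx]
          exact hg_conc.slope_anti_adjacent (mem_Ioi.mpr (hε.trans hxε))
            (mem_Ioi.mpr (hy0.trans hyz)) hxy hyz
  have hξ_le_g : ∀ x, 0 ≤ x → ξ x ≤ g x := by
    intro x hx
    by_cases hxε : x ≤ ε
    · rw [hξdef]; simp only [if_pos hxε]
      rcases eq_or_lt_of_le hx with h | h
      · simp [← h]
      · rcases eq_or_lt_of_le hxε with h2 | h2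
        · rw [h2, hgε]
        · -- 0 < x < ε : use chord x ε
          have hch := chord x ε h h2
          -- (g ε - g x) * x ≤ (g x - g 0) * (ε - x)
          have htarget : (g ε - g 0) * x ≤ (g x - g 0) * ε := by nlinarith
          have : s * x ≤ g x - g 0 := by
            rw [hsdef, div_mul_eq_mul_div, div_le_iff₀ hε]
            linarith
          linarith
    · rw [hξ_eq_ge x (not_le.mp hxε).le]
  have hξ_bdd : ∀ x, 0 ≤ x → ‖ξ x‖ ≤ 1 := by
    intro x hx
    rw [Real.norm_eq_abs, abs_le]
    constructor
    · have h1 : ξ 0 ≤ ξ x := hξ_mono hx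
      have h2 : ξ 0 = g 0 := by rw [hξdef]; simp only [if_pos hε.le]; ring
      have := hg_lb 0 le_rfl
      linarith
    · by_cases hxε : x ≤ ε
      · have h1 : ξ x ≤ ξ ε := hξ_mono hxε
        rw [hξ_eq_ge ε le_rfl] at h1
        exact h1.trans (hg_ub ε hε.le)
      · rw [hξ_eq_ge x (not_le.mp hxε).le]
        exact hg_ub x hx
  have hξA_int : Integrable (fun ω => ξ (A ω)) P :=
    Integrable.mono' (integrable_const 1)
      ((hξ_mono.measurable.comp hA).aestronglyMeasurable)
      (Filter.Eventually.of_forall (fun ω => hξ_bdd _ (hA0 ω)))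
  have hξB_int : Integrable (fun ω => ξ (B ω)) P :=
    Integrable.mono' (integrable_const 1)
      ((hξ_mono.measurable.comp hB).aestronglyMeasurable)
      (Filter.Eventually.of_forall (fun ω => hξ_bdd _ (hB0 ω)))
  have hgB_int : Integrable (fun ω => g (B ω)) P :=
    Integrable.mono' (integrable_const 1)
      ((hg_mono.measurable.comp hB).aestronglyMeasurable)
      (Filter.Eventually.of_forall (hbd B hB0))
  have h1 : ∫ ω, ξ (A ω) ∂P ≤ ∫ ω, ξ (B ω) ∂P := hicv ξ hξ_mono hξ_conc hξA_int hξB_int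
  have h2 : ∫ ω, ξ (B ω) ∂P ≤ ∫ ω, g (B ω) ∂P :=
    integral_mono hξB_int hgB_int (fun ω => hξ_le_g _ (hB0 ω))
  set S : Set Ω := A ⁻¹' Ioo 0 ε with hSdef
  have hSmeas : MeasurableSet S := hA measurableSet_Ioo
  have h3 : ∫ ω, g (A ω) ∂P - ∫ ω, ξ (A ω) ∂P ≤ 2 * (P S).toReal := by
    rw [← integral_sub hgA_int hξA_int]
    have hmono : ∀ ω, g (A ω) - ξ (A ω) ≤ S.indicator (fun _ => (2:ℝ)) ω := by
      intro ω
      by_cases hω : ω ∈ S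
      · rw [Set.indicator_of_mem hω]
        have hb1 := hbd A hA0 ω
        have hb2 := hξ_bdd (A ω) (hA0 ω)
        rw [Real.norm_eq_abs, abs_le] at hb1 hb2
        linarith [hb1.1, hb1.2, hb2.1, hb2.2]
      · rw [Set.indicator_of_notMem hω]
        have hnot : ¬ (0 < A ω ∧ A ω < ε) := by
          simpa [hSdef, Set.mem_preimage, Set.mem_Ioo] using hω
        rcases le_or_gt ε (A ω) with h | h
        · rw [hξ_eq_ge _ h]; linarith
        · have hAz : A ω = 0 := by
            rcases eq_or_lt_of_le (hA0 ω) with h' | h'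
            · exact h'.symm
            · exact absurd ⟨h', h⟩ hnot
          rw [hAz]
          have hξ0 : ξ 0 = g 0 := by
            rw [hξdef]; simp only [if_pos hε.le, mul_zero, add_zero]
          rw [hξ0]; linarith
    calc ∫ ω, (g (A ω) - ξ (A ω)) ∂P ≤ ∫ ω, S.indicator (fun _ => (2:ℝ)) ω ∂P :=
        integral_mono (hgA_int.sub hξA_int) ((integrable_const 2).indicator hSmeas) hmono
      _ = (P S).toReal • 2 := integral_indicator_const 2 hSmeas
      _ = 2 * (P S).toReal := by rw [smul_eq_mul]; ring
  have h4 : 2 * (P S).toReal < δ := by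
    have h5 : (P S).toReal < δ/4 := hn
    linarith
  linarith







lemma prob_gt_eq
    {Ω : Type*} [MeasurableSpace Ω] (P : Measure Ω) [IsProbabilityMeasure P]
    (V : Fin 5 → Ω → ℝ) (hmeas : ∀ i, Measurable (V i))
    (hindep : iIndepFun V P)
    (a b c d : Fin 5)
    (hab : a ≠ b) (hac : a ≠ c) (hbc : b ≠ c)
    (had : a ≠ d) (hbd : b ≠ d) (hcd : c ≠ d) :
    (P {ω | V d ω < V a ω ∧ V d ω < V b ω ∧ V d ω < V c ω}).toReal
      = ∫ t, sf (P.map (V a)) t * sf (P.map (V b)) t * sf (P.map (V c)) t ∂(P.map (V d)) := by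
  haveI hpa : IsProbabilityMeasure (P.map (V a)) := Measure.isProbabilityMeasure_map (hmeas a).aemeasurable
  haveI hpb : IsProbabilityMeasure (P.map (V b)) := Measure.isProbabilityMeasure_map (hmeas b).aemeasurable
  haveI hpc : IsProbabilityMeasure (P.map (V c)) := Measure.isProbabilityMeasure_map (hmeas c).aemeasurable
  haveI hpd : IsProbabilityMeasure (P.map (V d)) := Measure.isProbabilityMeasure_map (hmeas d).aemeasurable
  set T : Finset (Fin 5) := {a, b, c} with hT
  have hdT : Disjoint ({d} : Finset (Fin 5)) T := by
    simp [hT, Finset.disjoint_left, had.symm, hbd.symm, hcd.symm]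
  have hfin := hindep.indepFun_finset {d} T hdT hmeas
  have haT : a ∈ T := by simp [hT]
  have hbT : b ∈ T := by simp [hT]
  have hcT : c ∈ T := by simp [hT]
  set W : Ω → ℝ × ℝ × ℝ := fun ω => (V a ω, V b ω, V c ω) with hW
  have hWmeas : Measurable W := (hmeas a).prodMk ((hmeas b).prodMk (hmeas c))
  have hpair : IndepFun (V d) W P := by
    have hφ : Measurable (fun w : ({x // x ∈ ({d} : Finset (Fin 5))}) → ℝ => w ⟨d, by simp⟩) :=
      measurable_pi_apply _
    have hψ : Measurable (fun w : ({x // x ∈ T}) → ℝ =>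
        (w ⟨a, haT⟩, w ⟨b, hbT⟩, w ⟨c, hcT⟩)) :=
      (measurable_pi_apply _).prodMk ((measurable_pi_apply _).prodMk (measurable_pi_apply _))
    exact hfin.comp hφ hψ
  set U : Set (ℝ × (ℝ × ℝ × ℝ)) :=
    {p | p.1 < p.2.1 ∧ p.1 < p.2.2.1 ∧ p.1 < p.2.2.2} with hU
  have hUmeas : MeasurableSet U := by
    apply MeasurableSet.inter
    · exact measurableSet_lt measurable_fst (measurable_fst.comp measurable_snd)
    apply MeasurableSet.inter
    · exact measurableSet_lt measurable_fst
        ((measurable_fst.comp measurable_snd).comp measurable_snd)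
    · exact measurableSet_lt measurable_fst
        ((measurable_snd.comp measurable_snd).comp measurable_snd)
  have hev : {ω | V d ω < V a ω ∧ V d ω < V b ω ∧ V d ω < V c ω}
      = (fun ω => (V d ω, W ω)) ⁻¹' U := rfl
  have hmain : P {ω | V d ω < V a ω ∧ V d ω < V b ω ∧ V d ω < V c ω}
      = ∫⁻ t, (P.map (V a)) (Ioi t) * (P.map (V b)) (Ioi t) * (P.map (V c)) (Ioi t)
          ∂(P.map (V d)) := by
    rw [hev, ← Measure.map_apply ((hmeas d).prodMk hWmeas) hUmeas,
      (indepFun_iff_map_prod_eq_prod_map_map (hmeas d).aemeasurable hWmeas.aemeasurable).mp hpair,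
      Measure.prod_apply hUmeas]
    refine lintegral_congr fun t => ?_
    have hsec : Prod.mk t ⁻¹' U = {v : ℝ × ℝ × ℝ | t < v.1 ∧ t < v.2.1 ∧ t < v.2.2} := rfl
    rw [hsec, Measure.map_apply hWmeas (by
      apply MeasurableSet.inter
      · exact measurableSet_lt measurable_const measurable_fst
      apply MeasurableSet.inter
      · exact measurableSet_lt measurable_const (measurable_fst.comp measurable_snd)
      · exact measurableSet_lt measurable_const (measurable_snd.comp measurable_snd))]
    have hpre : W ⁻¹' {v : ℝ × ℝ × ℝ | t < v.1 ∧ t < v.2.1 ∧ t < v.2.2}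
        = ⋂ i ∈ T, V i ⁻¹' Ioi t := by
      ext ω
      simp [hW, hT, Set.mem_preimage, Set.mem_Ioi]
    rw [hpre, hindep.measure_inter_preimage_eq_mul T (sets := fun _ => Ioi t)
      (fun i _ => measurableSet_Ioi)]
    have hprodT : ∏ i ∈ T, P (V i ⁻¹' Ioi t)
        = P (V a ⁻¹' Ioi t) * P (V b ⁻¹' Ioi t) * P (V c ⁻¹' Ioi t) := by
      rw [hT]
      rw [Finset.prod_insert (by simp [hab, hac]), Finset.prod_insert (by simp [hbc]),
        Finset.prod_singleton]
      ring
    rw [hprodT, Measure.map_apply (hmeas a) measurableSet_Ioi,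
      Measure.map_apply (hmeas b) measurableSet_Ioi,
      Measure.map_apply (hmeas c) measurableSet_Ioi]
  rw [hmain]
  simp only [sf]
  rw [integral_eq_lintegral_of_nonneg_ae
    (Filter.Eventually.of_forall fun t =>
      mul_nonneg (mul_nonneg ENNReal.toReal_nonneg ENNReal.toReal_nonneg) ENNReal.toReal_nonneg)
    ((((sf_meas (P.map (V a))).mul (sf_meas (P.map (V b)))).mul
      (sf_meas (P.map (V c)))).aestronglyMeasurable)]
  congr 1
  refine lintegral_congr fun t => ?_
  rw [ENNReal.ofReal_mul (mul_nonneg ENNReal.toReal_nonneg ENNReal.toReal_nonneg),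
    ENNReal.ofReal_mul ENNReal.toReal_nonneg]
  rw [ENNReal.ofReal_toReal (measure_ne_top _ _), ENNReal.ofReal_toReal (measure_ne_top _ _),
    ENNReal.ofReal_toReal (measure_ne_top _ _)]


end SP8

open SP8

theorem model_II_series_sp_icv
    (Ω : Type*) [MeasurableSpace Ω] (P : Measure Ω) [IsProbabilityMeasure P]
    (V : Fin 5 → Ω → ℝ)
    (hmeas : ∀ i, Measurable (V i))
    (hnonneg : ∀ i, ∀ ω, 0 ≤ V i ω)
    (hindep : iIndepFun V P)
    (surv : Fin 5 → ℝ → ℝ)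
    (hsurv : ∀ i t, surv i t = (P {ω | V i ω > t}).toReal)
    -- X₁ ≤_icv X₂
    (hicvX : ∀ ξ : ℝ → ℝ, Monotone ξ → ConcaveOn ℝ Set.univ ξ →
        Integrable (fun ω => ξ (V 0 ω)) P → Integrable (fun ω => ξ (V 1 ω)) P →
        ∫ ω, ξ (V 0 ω) ∂P ≤ ∫ ω, ξ (V 1 ω) ∂P)
    -- Y₂* ≤_icv Y₁*
    (hicvY : ∀ ξ : ℝ → ℝ, Monotone ξ → ConcaveOn ℝ Set.univ ξ →
        Integrable (fun ω => ξ (V 4 ω)) P → Integrable (fun ω => ξ (V 3 ω)) P →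
        ∫ ω, ξ (V 4 ω) ∂P ≤ ∫ ω, ξ (V 3 ω) ∂P)
    -- Y₂*, X₁, X₃,…,Xₙ (or Y₁*, X₂, X₃,…,Xₙ) have convex survival functions
    (hconvex :
      (ConvexOn ℝ (Set.Ici 0) (surv 4) ∧ ConvexOn ℝ (Set.Ici 0) (surv 0) ∧
        ConvexOn ℝ (Set.Ici 0) (surv 2)) ∨
      (ConvexOn ℝ (Set.Ici 0) (surv 3) ∧ ConvexOn ℝ (Set.Ici 0) (surv 1) ∧
        ConvexOn ℝ (Set.Ici 0) (surv 2))) :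
    -- conclusion: P(V₂ˢ > V₁ˢ) ≤ P(V₁ˢ > V₂ˢ)
    P {ω | V 4 ω > V 1 ω ∧ V 0 ω > V 1 ω ∧ V 2 ω > V 1 ω} ≤
    P {ω | V 3 ω > V 0 ω ∧ V 1 ω > V 0 ω ∧ V 2 ω > V 0 ω} := by

  haveI h0i : IsProbabilityMeasure (P.map (V 0)) := Measure.isProbabilityMeasure_map (hmeas 0).aemeasurable
  haveI h1i : IsProbabilityMeasure (P.map (V 1)) := Measure.isProbabilityMeasure_map (hmeas 1).aemeasurable
  haveI h2i : IsProbabilityMeasure (P.map (V 2)) := Measure.isProbabilityMeasure_map (hmeas 2).aemeasurable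
  haveI h3i : IsProbabilityMeasure (P.map (V 3)) := Measure.isProbabilityMeasure_map (hmeas 3).aemeasurable
  haveI h4i : IsProbabilityMeasure (P.map (V 4)) := Measure.isProbabilityMeasure_map (hmeas 4).aemeasurable
  have hsurv_eq : ∀ i, surv i = sf (P.map (V i)) := by
    intro i; funext t
    rw [hsurv i t, sf, Measure.map_apply (hmeas i) measurableSet_Ioi]
    rfl
  have hmap : ∀ (W : Ω → ℝ), Measurable W → ∀ (f : ℝ → ℝ), Measurable f →
      ∫ y, f y ∂(P.map W) = ∫ ω, f (W ω) ∂P := fun W hW f hf =>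
    integral_map hW.aemeasurable hf.aestronglyMeasurable
  -- generic "G-step"
  have keystep : ∀ (A B : Ω → ℝ), Measurable A → Measurable B →
      (∀ ω, 0 ≤ A ω) → (∀ ω, 0 ≤ B ω) →
      (∀ ξ : ℝ → ℝ, Monotone ξ → ConcaveOn ℝ Set.univ ξ →
          Integrable (fun ω => ξ (A ω)) P → Integrable (fun ω => ξ (B ω)) P →
          ∫ ω, ξ (A ω) ∂P ≤ ∫ ω, ξ (B ω) ∂P) →
      ∀ (base : Measure ℝ), IsProbabilityMeasure base → ConvexOn ℝ (Ici 0) (sf base) →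
      ∀ (q : ℝ → ℝ), Measurable q → Antitone q → (∀ t, 0 ≤ q t) → (∀ t, q t ≤ 1) →
      ∫ t, q t * sf (P.map A) t ∂base ≤ ∫ t, q t * sf (P.map B) t ∂base := by
    intro A B hA hB hA0 hB0 hicv base hbase hbconv q hq hqa hq0 hq1
    haveI := hbase
    haveI : IsProbabilityMeasure (P.map A) := Measure.isProbabilityMeasure_map hA.aemeasurable
    haveI : IsProbabilityMeasure (P.map B) := Measure.isProbabilityMeasure_map hB.aemeasurable
    rw [fubini_surv base (P.map A) hq hq0 hq1, fubini_surv base (P.map B) hq hq0 hq1,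
      hmap A hA _ (GG_mono hq hq0 hq1).measurable, hmap B hB _ (GG_mono hq hq0 hq1).measurable]
    exact icv_compare P A B hA hB hA0 hB0 hicv (GG base q)
      (GG_mono hq hq0 hq1) (GG_concave base hbconv hq hqa hq0 hq1)
      (fun x _ => le_trans (by norm_num) (GG_nonneg hq0 x))
      (fun x _ => GG_le_one hq hq0 hq1 x)
  -- generic "ψ-step"
  have psistep : ∀ (A B : Ω → ℝ), Measurable A → Measurable B →
      (∀ ω, 0 ≤ A ω) → (∀ ω, 0 ≤ B ω) →
      (∀ ξ : ℝ → ℝ, Monotone ξ → ConcaveOn ℝ Set.univ ξ →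
          Integrable (fun ω => ξ (A ω)) P → Integrable (fun ω => ξ (B ω)) P →
          ∫ ω, ξ (A ω) ∂P ≤ ∫ ω, ξ (B ω) ∂P) →
      ∀ (ψ : ℝ → ℝ), Measurable ψ → Antitone ψ → ConvexOn ℝ (Ici 0) ψ →
      (∀ t, 0 ≤ ψ t) → (∀ t, ψ t ≤ 1) →
      ∫ t, ψ t ∂(P.map B) ≤ ∫ t, ψ t ∂(P.map A) := by
    intro A B hA hB hA0 hB0 hicv ψ hψm hψa hψc hψ0 hψ1
    have hkey := icv_compare P A B hA hB hA0 hB0 hicv (fun t => -(ψ t))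
      (fun x y hxy => neg_le_neg (hψa hxy))
      (by
        have h := (hψc.subset Ioi_subset_Ici_self (convex_Ioi 0)).neg
        exact h)
      (fun x _ => by show -1 ≤ -(ψ x); linarith [hψ1 x])
      (fun x _ => by show -(ψ x) ≤ 1; linarith [hψ0 x])
    have hkey2 : ∫ ω, -(ψ (A ω)) ∂P ≤ ∫ ω, -(ψ (B ω)) ∂P := hkey
    rw [integral_neg, integral_neg] at hkey2
    rw [hmap B hB ψ hψm, hmap A hA ψ hψm]
    linarith
  -- rewrite the goal
  have e1 : P {ω | V 4 ω > V 1 ω ∧ V 0 ω > V 1 ω ∧ V 2 ω > V 1 ω}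
      = P {ω | V 1 ω < V 4 ω ∧ V 1 ω < V 0 ω ∧ V 1 ω < V 2 ω} := rfl
  have e2 : P {ω | V 3 ω > V 0 ω ∧ V 1 ω > V 0 ω ∧ V 2 ω > V 0 ω}
      = P {ω | V 0 ω < V 3 ω ∧ V 0 ω < V 1 ω ∧ V 0 ω < V 2 ω} := rfl
  rw [e1, e2, ← ENNReal.toReal_le_toReal (measure_ne_top P _) (measure_ne_top P _),
    prob_gt_eq P V hmeas hindep 4 0 2 1 (by decide) (by decide) (by decide) (by decide)
      (by decide) (by decide),
    prob_gt_eq P V hmeas hindep 3 1 2 0 (by decide) (by decide) (by decide) (by decide)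
      (by decide) (by decide)]
  -- abbreviations
  set s0 := sf (P.map (V 0)) with hs0
  set s1 := sf (P.map (V 1)) with hs1
  set s2 := sf (P.map (V 2)) with hs2
  set s3 := sf (P.map (V 3)) with hs3
  set s4 := sf (P.map (V 4)) with hs4
  have hanti : ∀ i : Fin 5, Antitone (sf (P.map (V i))) := fun i => sf_anti _
  have hnn : ∀ (i : Fin 5) (t : ℝ), 0 ≤ sf (P.map (V i)) t := fun i t => sf_nonneg _ t
  have hle1 : ∀ (i : Fin 5) (t : ℝ), sf (P.map (V i)) t ≤ 1 := fun i t =>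
    @sf_le_one (P.map (V i)) (Measure.isProbabilityMeasure_map (hmeas i).aemeasurable) t
  -- convexity of triple products
  have hconv3 : ∀ (i j k : Fin 5), ConvexOn ℝ (Ici 0) (sf (P.map (V i))) →
      ConvexOn ℝ (Ici 0) (sf (P.map (V j))) → ConvexOn ℝ (Ici 0) (sf (P.map (V k))) →
      ConvexOn ℝ (Ici 0)
        (fun t => sf (P.map (V i)) t * sf (P.map (V j)) t * sf (P.map (V k)) t) := by
    intro i j k hi hj hk
    have m1 := hi.mul hj (fun x _ => hnn i x) (fun x _ => hnn j x)
      (((hanti i).antitoneOn _).monovaryOn ((hanti j).antitoneOn _))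
    have hpa : Antitone (fun t => sf (P.map (V i)) t * sf (P.map (V j)) t) :=
      anti_mul (hanti i) (hanti j) (hnn i) (hnn j)
    have m2 := m1.mul hk (fun x _ => mul_nonneg (hnn i x) (hnn j x)) (fun x _ => hnn k x)
      ((hpa.antitoneOn _).monovaryOn ((hanti k).antitoneOn _))
    exact m2
  have hψanti : ∀ (i j k : Fin 5),
      Antitone (fun t => sf (P.map (V i)) t * sf (P.map (V j)) t * sf (P.map (V k)) t) :=
    fun i j k => anti_mul (anti_mul (hanti i) (hanti j) (hnn i) (hnn j)) (hanti k)
      (fun x => mul_nonneg (hnn i x) (hnn j x)) (hnn k)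
  have hψmeas : ∀ (i j k : Fin 5),
      Measurable (fun t => sf (P.map (V i)) t * sf (P.map (V j)) t * sf (P.map (V k)) t) :=
    fun i j k => ((sf_meas _).mul (sf_meas _)).mul (sf_meas _)
  have hψ1 : ∀ (i j k : Fin 5) (t : ℝ),
      sf (P.map (V i)) t * sf (P.map (V j)) t * sf (P.map (V k)) t ≤ 1 := by
    intro i j k t
    have h12 : sf (P.map (V i)) t * sf (P.map (V j)) t ≤ 1 := by
      nlinarith [hnn i t, hnn j t, hle1 i t, hle1 j t]
    nlinarith [hnn k t, hle1 k t, mul_nonneg (hnn i t) (hnn j t), h12]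
  have hq2meas : ∀ (i j : Fin 5), Measurable (fun t => sf (P.map (V i)) t * sf (P.map (V j)) t) :=
    fun i j => (sf_meas _).mul (sf_meas _)
  have hq2anti : ∀ (i j : Fin 5), Antitone (fun t => sf (P.map (V i)) t * sf (P.map (V j)) t) :=
    fun i j => anti_mul (hanti i) (hanti j) (hnn i) (hnn j)
  have hq2nn : ∀ (i j : Fin 5) (t : ℝ), 0 ≤ sf (P.map (V i)) t * sf (P.map (V j)) t :=
    fun i j t => mul_nonneg (hnn i t) (hnn j t)
  have hq2le1 : ∀ (i j : Fin 5) (t : ℝ), sf (P.map (V i)) t * sf (P.map (V j)) t ≤ 1 := by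
    intro i j t
    nlinarith [hnn i t, hnn j t, hle1 i t, hle1 j t]
  rcases hconvex with ⟨hc4, hc0, hc2⟩ | ⟨hc3, hc1, hc2⟩
  · -- branch 1 : s4, s0, s2 convex
    rw [hsurv_eq 4] at hc4
    rw [hsurv_eq 0] at hc0
    rw [hsurv_eq 2] at hc2
    calc ∫ t, s4 t * s0 t * s2 t ∂(P.map (V 1))
        ≤ ∫ t, s4 t * s0 t * s2 t ∂(P.map (V 0)) := by
          exact psistep (V 0) (V 1) (hmeas 0) (hmeas 1) (hnonneg 0) (hnonneg 1) hicvX _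
            (hψmeas 4 0 2) (hψanti 4 0 2) (hconv3 4 0 2 hc4 hc0 hc2)
            (fun t => mul_nonneg (hq2nn 4 0 t) (hnn 2 t)) (hψ1 4 0 2)
      _ = ∫ t, (s0 t * s2 t) * s4 t ∂(P.map (V 0)) := by
          refine integral_congr_ae (Filter.Eventually.of_forall fun t => by ring)
      _ ≤ ∫ t, (s0 t * s2 t) * s3 t ∂(P.map (V 0)) := by
          exact keystep (V 4) (V 3) (hmeas 4) (hmeas 3) (hnonneg 4) (hnonneg 3) hicvY
            (P.map (V 0)) h0i hc0 _ (hq2meas 0 2) (hq2anti 0 2) (hq2nn 0 2) (hq2le1 0 2)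
      _ = ∫ t, (s3 t * s2 t) * s0 t ∂(P.map (V 0)) := by
          refine integral_congr_ae (Filter.Eventually.of_forall fun t => by ring)
      _ ≤ ∫ t, (s3 t * s2 t) * s1 t ∂(P.map (V 0)) := by
          exact keystep (V 0) (V 1) (hmeas 0) (hmeas 1) (hnonneg 0) (hnonneg 1) hicvX
            (P.map (V 0)) h0i hc0 _ (hq2meas 3 2) (hq2anti 3 2) (hq2nn 3 2) (hq2le1 3 2)
      _ = ∫ t, s3 t * s1 t * s2 t ∂(P.map (V 0)) := by
          refine integral_congr_ae (Filter.Eventually.of_forall fun t => by ring)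
  · -- branch 2 : s3, s1, s2 convex
    rw [hsurv_eq 3] at hc3
    rw [hsurv_eq 1] at hc1
    rw [hsurv_eq 2] at hc2
    calc ∫ t, s4 t * s0 t * s2 t ∂(P.map (V 1))
        = ∫ t, (s0 t * s2 t) * s4 t ∂(P.map (V 1)) := by
          refine integral_congr_ae (Filter.Eventually.of_forall fun t => by ring)
      _ ≤ ∫ t, (s0 t * s2 t) * s3 t ∂(P.map (V 1)) := by
          exact keystep (V 4) (V 3) (hmeas 4) (hmeas 3) (hnonneg 4) (hnonneg 3) hicvY
            (P.map (V 1)) h1i hc1 _ (hq2meas 0 2) (hq2anti 0 2) (hq2nn 0 2) (hq2le1 0 2)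
      _ = ∫ t, (s3 t * s2 t) * s0 t ∂(P.map (V 1)) := by
          refine integral_congr_ae (Filter.Eventually.of_forall fun t => by ring)
      _ ≤ ∫ t, (s3 t * s2 t) * s1 t ∂(P.map (V 1)) := by
          exact keystep (V 0) (V 1) (hmeas 0) (hmeas 1) (hnonneg 0) (hnonneg 1) hicvX
            (P.map (V 1)) h1i hc1 _ (hq2meas 3 2) (hq2anti 3 2) (hq2nn 3 2) (hq2le1 3 2)
      _ = ∫ t, s3 t * s1 t * s2 t ∂(P.map (V 1)) := by
          refine integral_congr_ae (Filter.Eventually.of_forall fun t => by ring)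
      _ ≤ ∫ t, s3 t * s1 t * s2 t ∂(P.map (V 0)) := by
          exact psistep (V 0) (V 1) (hmeas 0) (hmeas 1) (hnonneg 0) (hnonneg 1) hicvX _
            (hψmeas 3 1 2) (hψanti 3 1 2) (hconv3 3 1 2 hc3 hc1 hc2)
            (fun t => mul_nonneg (hq2nn 3 1 t) (hnn 2 t)) (hψ1 3 1 2)
end

section
/- If δ(u) = u - ω(u) and ω(u) - γ(u) are both increasing in u ≥ 0 and X has a log-concave survival function, then for each fixed t ≥ 0 the map u ↦ [F̄_X(t - δ(u)) / F̄_X(ω(u))] · F̄_X(γ(u)) is nonnegative and increasing on [0, t]. -/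
/- STATEMENT 9 (Lemma 4.1, from Li et al.): If δ(u) = u - ω(u) and ω(u) - γ(u) are both
increasing in u ≥ 0 and X has a log-concave survival function F̄_X (with 0 ≤ γ(u) ≤ ω(u) ≤ u,
γ, ω increasing), then for each fixed t ≥ 0 the map
u ↦ [F̄_X(t - δ(u)) / F̄_X(ω(u))] · F̄_X(γ(u)) is nonnegative and increasing on [0, t]. -/
lemma four_point_concave {f : ℝ → ℝ} (hf : ConcaveOn ℝ (Set.Ici 0) f)
    {x y s : ℝ} (hx : 0 ≤ x) (hxy : x ≤ y) (hs : 0 ≤ s) :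
    f x + f (y + s) ≤ f (x + s) + f y := by
  have hy : (0:ℝ) ≤ y := le_trans hx hxy
  rcases eq_or_lt_of_le (show x ≤ y + s by linarith) with h | h
  · have hs0 : s = 0 := by linarith
    have hyx : y = x := by linarith
    simp [hs0, hyx]
  · set d := y + s - x with hd
    have hd0 : 0 < d := by simp only [hd]; linarith
    have hsum : s/d + (y-x)/d = 1 := by field_simp; simp only [hd]; ring
    have hmul1 : (s/d) * d = s := div_mul_cancel₀ s (ne_of_gt hd0)
    have hmul2 : ((y-x)/d) * d = y - x := div_mul_cancel₀ _ (ne_of_gt hd0)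
    have hp1 : (0:ℝ) ≤ 1 - s/d := by
      have : s/d ≤ 1 := by rw [div_le_one hd0]; linarith
      linarith
    have hp2 : (0:ℝ) ≤ 1 - (y-x)/d := by
      have : (y-x)/d ≤ 1 := by rw [div_le_one hd0]; linarith
      linarith
    have h1 : (1 - s/d) * f x + (s/d) * f (y+s) ≤ f (x + s) := by
      have key := hf.2 (Set.mem_Ici.mpr hx) (Set.mem_Ici.mpr (by linarith : (0:ℝ) ≤ y + s))
        hp1 (by positivity : (0:ℝ) ≤ s/d) (show (1 - s/d) + s/d = 1 by ring)
      have harg : (1 - s/d) • x + (s/d) • (y+s) = x + s := by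
        simp only [smul_eq_mul]; nlinarith [hmul1]
      rw [harg] at key
      simpa using key
    have h2 : (1 - (y-x)/d) * f x + ((y-x)/d) * f (y+s) ≤ f y := by
      have key := hf.2 (Set.mem_Ici.mpr hx) (Set.mem_Ici.mpr (by linarith : (0:ℝ) ≤ y + s))
        hp2 (div_nonneg (by linarith) hd0.le) (show (1 - (y-x)/d) + (y-x)/d = 1 by ring)
      have harg : (1 - (y-x)/d) • x + ((y-x)/d) • (y+s) = y := by
        simp only [smul_eq_mul]; nlinarith [hmul2]
      rw [harg] at key
      simpa using key
    have hq : (y-x)/d = 1 - s/d := by linarith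
    rw [hq] at h2
    have := add_le_add h1 h2
    nlinarith [this]

theorem log_concave_standby_integrand_monotone
    (SX : ℝ → ℝ) (γ ω : ℝ → ℝ)
    (hSX_pos : ∀ u ≥ 0, 0 < SX u) (hSX_anti : Antitone SX)
    (hlogcc : ConcaveOn ℝ (Set.Ici 0) (fun u => Real.log (SX u)))
    (hγ_mono : MonotoneOn γ (Set.Ici 0)) (hω_mono : MonotoneOn ω (Set.Ici 0))
    (hγ_nonneg : ∀ u ≥ 0, 0 ≤ γ u) (hγω : ∀ u ≥ 0, γ u ≤ ω u) (hω_le : ∀ u ≥ 0, ω u ≤ u)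
    (hδ_mono : MonotoneOn (fun u => u - ω u) (Set.Ici 0))
    (hωγ_mono : MonotoneOn (fun u => ω u - γ u) (Set.Ici 0)) :
    ∀ t ≥ 0,
      (∀ u ∈ Set.Icc 0 t, 0 ≤ (SX (t - (u - ω u)) / SX (ω u)) * SX (γ u)) ∧
      MonotoneOn (fun u => (SX (t - (u - ω u)) / SX (ω u)) * SX (γ u)) (Set.Icc 0 t) := by
  intro t ht
  set f : ℝ → ℝ := fun u => Real.log (SX u) with hf
  -- basic positivity facts for any u in [0, t]
  have harg : ∀ u ∈ Set.Icc (0:ℝ) t, 0 ≤ γ u ∧ 0 ≤ ω u ∧ 0 ≤ t - (u - ω u) := by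
    intro u hu
    obtain ⟨hu0, hut⟩ := hu
    have hγ0 := hγ_nonneg u hu0
    have hω0 : 0 ≤ ω u := le_trans hγ0 (hγω u hu0)
    refine ⟨hγ0, hω0, ?_⟩
    have := hω_le u hu0
    linarith
  constructor
  · intro u hu
    obtain ⟨h1, h2, h3⟩ := harg u hu
    have p1 := hSX_pos _ h3
    have p2 := hSX_pos _ h2
    have p3 := hSX_pos _ h1
    positivity
  · intro u hu v hv huv
    obtain ⟨hγu0, hωu0, hδu0⟩ := harg u hu
    obtain ⟨hγv0, hωv0, hδv0⟩ := harg v hv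
    obtain ⟨hu0, hut⟩ := hu
    obtain ⟨hv0, hvt⟩ := hv
    have hu' : u ∈ Set.Ici (0:ℝ) := hu0
    have hv' : v ∈ Set.Ici (0:ℝ) := hv0
    -- positivity of all six values
    have pAu := hSX_pos _ hδu0
    have pAv := hSX_pos _ hδv0
    have pGu := hSX_pos _ hγu0
    have pGv := hSX_pos _ hγv0
    have pWu := hSX_pos _ hωu0
    have pWv := hSX_pos _ hωv0
    -- (1) f(t - δ v) ≥ f(t - δ u)
    have hδ : u - ω u ≤ v - ω v := hδ_mono hu' hv' huv
    have hA : SX (t - (u - ω u)) ≤ SX (t - (v - ω v)) := hSX_anti (by linarith)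
    -- (2) four-point inequality: f(γ u) + f(ω v) ≤ f(ω u) + f(γ v)
    have hωuv : ω u ≤ ω v := hω_mono hu' hv' huv
    have hωγ : ω u - γ u ≤ ω v - γ v := hωγ_mono hu' hv' huv
    have hγωu := hγω u hu0
    have hγωv := hγω v hv0
    have hfp := four_point_concave hlogcc (f := f) (x := γ u)
      (y := ω v - (ω u - γ u)) (s := ω u - γ u) hγu0 (by linarith) (by linarith)
    have e1 : γ u + (ω u - γ u) = ω u := by ring
    have e2 : (ω v - (ω u - γ u)) + (ω u - γ u) = ω v := by ring
    rw [e1, e2] at hfp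
    -- f is antitone on nonneg values where SX positive
    have hmid : f (ω v - (ω u - γ u)) ≤ f (γ v) := by
      apply Real.log_le_log (hSX_pos _ (by linarith))
      exact hSX_anti (by linarith)
    have key : f (t - (u - ω u)) + f (γ u) + f (ω v) ≤
        f (t - (v - ω v)) + f (γ v) + f (ω u) := by
      have hAlog : f (t - (u - ω u)) ≤ f (t - (v - ω v)) := Real.log_le_log pAu hA
      simp only [hf] at hfp hmid ⊢
      linarith
    -- exponentiate
    have expkey : SX (t - (u - ω u)) * SX (γ u) * SX (ω v) ≤
        SX (t - (v - ω v)) * SX (γ v) * SX (ω u) := by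
      have l1 : Real.log (SX (t - (u - ω u)) * SX (γ u) * SX (ω v)) =
          f (t - (u - ω u)) + f (γ u) + f (ω v) := by
        rw [Real.log_mul (by positivity) pWv.ne', Real.log_mul pAu.ne' pGu.ne']
      have l2 : Real.log (SX (t - (v - ω v)) * SX (γ v) * SX (ω u)) =
          f (t - (v - ω v)) + f (γ v) + f (ω u) := by
        rw [Real.log_mul (by positivity) pWu.ne', Real.log_mul pAv.ne' pGv.ne']
      have := key
      rw [← l1, ← l2] at this
      exact (Real.log_le_log_iff (by positivity) (by positivity)).mp this
    show (SX (t - (u - ω u)) / SX (ω u)) * SX (γ u) ≤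
        (SX (t - (v - ω v)) / SX (ω v)) * SX (γ v)
    rw [div_mul_eq_mul_div, div_mul_eq_mul_div, div_le_div_iff₀ pWu pWv]
    nlinarith [expkey]
end

section
/- Suppose X₁⊛Y₁ and X₂⊛Y₂ share the same model functions γ, ω with δ(u) = u - ω(u) increasing and ω(u) = γ(u) for all u ≥ 0. If X₁ ≤_rhr X₂ and Y₁ ≤_st Y₂, then V₁^p ≤_st V₂^p, where V₁^p = max{X₁⊛Y₁, X₂, X₃,...,Xₙ} and V₂^p = max{X₁, X₂⊛Y₂, X₃,...,Xₙ}. -/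
open MeasureTheory Set

lemma aux_ii {g f : ℝ → ℝ} (hg : Monotone g) (hf : Continuous f) (a b : ℝ) :
    IntervalIntegrable (fun u => g u * f u) volume a b :=
  hg.intervalIntegrable.mul_continuousOn hf.continuousOn

lemma core_mono (F1 F2 f1 f2 g : ℝ → ℝ) (t : ℝ) (ht : 0 ≤ t)
    (hf1c : Continuous f1) (hf2c : Continuous f2)
    (hF1 : ∀ u, HasDerivAt F1 (f1 u) u) (hF2 : ∀ u, HasDerivAt F2 (f2 u) u)
    (hg : Monotone g) (hg0 : ∀ u, 0 ≤ g u)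
    (hK : ∀ s, 0 ≤ s → s ≤ t → F1 t * F2 s ≤ F2 t * F1 s) :
    F2 t * ∫ u in (0:ℝ)..t, g u * f1 u ≤ F1 t * ∫ u in (0:ℝ)..t, g u * f2 u := by
  set D' : ℝ → ℝ := fun s => F2 t * f1 s - F1 t * f2 s with hD'def
  set D : ℝ → ℝ := fun s => F2 t * F1 s - F1 t * F2 s with hDdef
  have hD'c : Continuous D' := (continuous_const.mul hf1c).sub (continuous_const.mul hf2c)
  have hD : ∀ u, HasDerivAt D (D' u) u := fun u =>
    ((hF1 u).const_mul (F2 t)).sub ((hF2 u).const_mul (F1 t))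
  have hDt : D t = 0 := by simp [hDdef]; ring
  have hDnonneg : ∀ s, 0 ≤ s → s ≤ t → 0 ≤ D s := fun s h0 h1 => by
    simpa [hDdef] using sub_nonneg.mpr (hK s h0 h1)
  set M : ℝ := g t with hM
  -- the indicator kernel
  set ψ : ℝ × ℝ → ℝ := fun p => Set.indicator {q : ℝ × ℝ | q.2 ≤ g q.1} (fun q => D' q.1) p
    with hψdef
  have hA : MeasurableSet {q : ℝ × ℝ | q.2 ≤ g q.1} :=
    measurableSet_le measurable_snd (hg.measurable.comp measurable_fst)
  -- boundedness of D'
  obtain ⟨C, hC⟩ := isCompact_Icc.exists_bound_of_continuousOn (hD'c.continuousOn (s := Icc 0 t))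
  -- integrability of ψ on the product
  have hψint : Integrable ψ ((volume.restrict (Ioc 0 t)).prod (volume.restrict (Ioc 0 M))) := by
    have hmeas : AEStronglyMeasurable ψ ((volume.restrict (Ioc 0 t)).prod (volume.restrict (Ioc 0 M))) :=
      ((hD'c.comp continuous_fst).stronglyMeasurable.indicator hA).aestronglyMeasurable
    refine ⟨hmeas, ?_⟩
    have hbound : ∀ᵐ p ∂((volume.restrict (Ioc 0 t)).prod (volume.restrict (Ioc 0 M))),
        ‖ψ p‖ ≤ C := by
      rw [Measure.prod_restrict]
      refine ae_restrict_of_forall_mem (measurableSet_Ioc.prod measurableSet_Ioc) ?_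
      rintro ⟨u, s⟩ ⟨hu, hs⟩
      have : ‖ψ (u, s)‖ ≤ ‖D' u‖ := by
        simp only [hψdef, Set.indicator_apply]
        split <;> simp [abs_nonneg]
      exact this.trans (hC u ⟨hu.1.le, hu.2⟩)
    exact (hasFiniteIntegral_const C).mono' hbound
  -- key inequality : ∫ g D' ≤ 0
  have key : (∫ u in (0:ℝ)..t, g u * D' u) ≤ 0 := by
    rw [intervalIntegral.integral_of_le ht]
    have E2 : (∫ u in Ioc 0 t, g u * D' u) = ∫ u in Ioc 0 t, ∫ s in Ioc 0 M, ψ (u, s) := by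
      refine setIntegral_congr_fun measurableSet_Ioc (fun u hu => ?_)
      have hrw : (fun s => ψ (u, s)) = (Iic (g u)).indicator (fun _ => D' u) := by
        funext s
        simp only [hψdef, Set.indicator_apply, Set.mem_setOf_eq, Set.mem_Iic]
      rw [hrw, MeasureTheory.integral_indicator measurableSet_Iic,
        Measure.restrict_restrict measurableSet_Iic, setIntegral_const]
      have hinter : Iic (g u) ∩ Ioc 0 M = Ioc 0 (g u) := by
        rw [Set.inter_comm, Set.Ioc_inter_Iic, min_eq_right (hg hu.2)]
      rw [hinter, Real.volume_real_Ioc_of_le (hg0 u), sub_zero, smul_eq_mul]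
    have E3 : (∫ u in Ioc 0 t, ∫ s in Ioc 0 M, ψ (u, s)) =
        ∫ s in Ioc 0 M, ∫ u in Ioc 0 t, ψ (u, s) :=
      MeasureTheory.integral_integral_swap hψint
    rw [E2, E3]
    refine MeasureTheory.integral_nonpos (fun s => ?_)
    -- inner u-integral equals D t - D c ≤ 0
    set A : Set ℝ := {u ∈ Icc 0 t | s ≤ g u} ∪ {t} with hAdef
    have hAne : A.Nonempty := ⟨t, Or.inr rfl⟩
    have hAbd : ∀ a ∈ A, (0:ℝ) ≤ a := by
      rintro a (⟨⟨h0, _⟩, _⟩ | rfl)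
      · exact h0
      · exact ht
    set c : ℝ := sInf A with hcdef
    have hc0 : 0 ≤ c := le_csInf hAne hAbd
    have hct : c ≤ t := csInf_le ⟨0, hAbd⟩ (Or.inr rfl)
    set B : Set ℝ := {u : ℝ | s ≤ g u} with hBdef
    have hBm : MeasurableSet B := measurableSet_le measurable_const hg.measurable
    have h1 : Ioo c t ⊆ B ∩ Ioc 0 t := by
      rintro u ⟨hcu, hut⟩
      obtain ⟨a, ha, hau⟩ := exists_lt_of_csInf_lt hAne (by rwa [← hcdef])
      rcases ha with ⟨⟨_, _⟩, hsa⟩ | hat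
      · exact ⟨le_trans hsa (hg hau.le), lt_of_le_of_lt hc0 hcu, hut.le⟩
      · rw [Set.mem_singleton_iff] at hat
        exact absurd ((hat ▸ hau).trans hut) (lt_irrefl t)
    have h2 : B ∩ Ioc 0 t ⊆ Icc c t := by
      rintro u ⟨hsu, h0u, hut⟩
      exact ⟨csInf_le ⟨0, hAbd⟩ (Or.inl ⟨⟨h0u.le, hut⟩, hsu⟩), hut⟩
    have hae : (B ∩ Ioc 0 t : Set ℝ) =ᵐ[volume] (Ioc c t : Set ℝ) := by
      rw [MeasureTheory.ae_eq_set]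
      constructor
      · refine measure_mono_null (fun u hu => ?_) (measure_singleton c)
        rcases hu with ⟨hu1, hu2⟩
        have h3 := h2 hu1
        rcases eq_or_lt_of_le h3.1 with h | h
        · exact h.symm
        · exact absurd ⟨h, h3.2⟩ hu2
      · refine measure_mono_null (fun u hu => ?_) (measure_singleton t)
        rcases hu with ⟨hu1, hu2⟩
        rcases eq_or_lt_of_le hu1.2 with h | h
        · exact h
        · exact absurd (h1 ⟨hu1.1, h⟩) hu2
    have Einner : (∫ u in Ioc 0 t, ψ (u, s)) = D t - D c := by
      have hrw : (fun u => ψ (u, s)) = B.indicator D' := by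
        funext u
        simp only [hψdef, hBdef, Set.indicator_apply, Set.mem_setOf_eq]
      rw [hrw, MeasureTheory.integral_indicator hBm,
        Measure.restrict_restrict hBm, setIntegral_congr_set hae,
        ← intervalIntegral.integral_of_le hct]
      exact intervalIntegral.integral_eq_sub_of_hasDerivAt
        (fun x _ => hD x) (hD'c.intervalIntegrable c t)
    show (∫ u in Ioc 0 t, ψ (u, s)) ≤ 0
    rw [Einner, hDt, zero_sub, neg_nonpos]
    exact hDnonneg c hc0 hct
  -- conclude
  have hi1 : IntervalIntegrable (fun u => g u * f1 u) volume 0 t := aux_ii hg hf1c 0 t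
  have hi2 : IntervalIntegrable (fun u => g u * f2 u) volume 0 t := aux_ii hg hf2c 0 t
  have hsplit : (∫ u in (0:ℝ)..t, g u * D' u) =
      F2 t * (∫ u in (0:ℝ)..t, g u * f1 u) - F1 t * ∫ u in (0:ℝ)..t, g u * f2 u := by
    have : (fun u => g u * D' u) =
        fun u => F2 t * (g u * f1 u) - F1 t * (g u * f2 u) := by
      funext u; simp only [hD'def]; ring
    rw [this, intervalIntegral.integral_sub (hi1.const_mul _) (hi2.const_mul _),
      intervalIntegral.integral_const_mul, intervalIntegral.integral_const_mul]
  linarith [key, hsplit.symm.trans_le key]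

/- STATEMENT 11 (Theorem 4.2): X₁⊛Y₁ and X₂⊛Y₂ share the same model functions γ, ω with
δ(u) = u - ω(u) increasing and ω = γ.  If X₁ ≤_rhr X₂ and Y₁ ≤_st Y₂, then
V₁ᵖ = max{X₁⊛Y₁, X₂, X₃,…,Xₙ} ≤_st V₂ᵖ = max{X₁, X₂⊛Y₂, X₃,…,Xₙ}.  When ω = γ the
standby distribution reduces to F_{Xᵢ⊛Yᵢ}(t) = (1 - SXᵢ t) - ∫₀ᵗ SYᵢ(t-δ u)·fXᵢ u du;
the distribution of a parallel system of independent components is the product of the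
component distribution functions (FH being that of H₂ = max{X₃,…,Xₙ}). -/
theorem model_II_parallel_st_common_model
    (SX1 SX2 SY1 SY2 FH fX1 fX2 : ℝ → ℝ) (γ ω : ℝ → ℝ)
    -- densities
    (hd1 : ∀ u, HasDerivAt SX1 (-(fX1 u)) u) (hd2 : ∀ u, HasDerivAt SX2 (-(fX2 u)) u)
    (hf1_nonneg : ∀ u, 0 ≤ fX1 u) (hf2_nonneg : ∀ u, 0 ≤ fX2 u)
    (hf1_cont : Continuous fX1) (hf2_cont : Continuous fX2)
    -- survival / distribution functions
    (hSX1_bd : ∀ u, 0 ≤ SX1 u ∧ SX1 u ≤ 1) (hSX2_bd : ∀ u, 0 ≤ SX2 u ∧ SX2 u ≤ 1)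
    (hSY1_anti : Antitone SY1) (hSY2_anti : Antitone SY2)
    (hSY1_nonneg : ∀ u, 0 ≤ SY1 u) (hSY2_nonneg : ∀ u, 0 ≤ SY2 u)
    (hFH_nonneg : ∀ u, 0 ≤ FH u)
    -- common model functions: increasing, 0 ≤ ω(u) = γ(u) ≤ u, δ increasing
    (hγ_mono : MonotoneOn γ (Set.Ici 0)) (hω_mono : MonotoneOn ω (Set.Ici 0))
    (hω_bd : ∀ u ≥ 0, 0 ≤ ω u ∧ ω u ≤ u) (hωγ : ∀ u ≥ 0, ω u = γ u)
    (hδ_mono : MonotoneOn (fun u => u - ω u) (Set.Ici 0))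
    -- X₁ ≤_rhr X₂ and Y₁ ≤_st Y₂
    (hrhrX : ∀ s t : ℝ, s ≤ t → (1 - SX2 s) * (1 - SX1 t) ≤ (1 - SX2 t) * (1 - SX1 s))
    (hstY : ∀ u, SY1 u ≤ SY2 u) :
    -- conclusion: V₁ᵖ ≤_st V₂ᵖ, i.e. F_{V₂ᵖ} ≤ F_{V₁ᵖ} pointwise
    ∀ t ≥ 0,
      (1 - SX1 t) * ((1 - SX2 t) - ∫ u in (0:ℝ)..t, SY2 (t - (u - ω u)) * fX2 u) * FH t ≤
      ((1 - SX1 t) - ∫ u in (0:ℝ)..t, SY1 (t - (u - ω u)) * fX1 u) * (1 - SX2 t) * FH t := by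
  intro t ht
  set π : ℝ → ℝ := fun u => min (max u 0) t with hπdef
  have hπ_mono : Monotone π := fun a b hab =>
    min_le_min (max_le_max hab (le_refl 0)) (le_refl t)
  have hπ_mem : ∀ u, π u ∈ Set.Icc (0:ℝ) t := fun u =>
    ⟨le_min (le_max_right u 0) ht, min_le_right _ _⟩
  have hπ_id : ∀ u ∈ Set.Icc (0:ℝ) t, π u = u := fun u hu => by
    simp [hπdef, max_eq_left hu.1, min_eq_left hu.2]
  have hδπ : Monotone (fun u => π u - ω (π u)) := fun a b hab =>
    hδ_mono (hπ_mem a).1 (hπ_mem b).1 (hπ_mono hab)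
  set g1 : ℝ → ℝ := fun u => SY1 (t - (π u - ω (π u))) with hg1def
  set g2 : ℝ → ℝ := fun u => SY2 (t - (π u - ω (π u))) with hg2def
  have hg1_mono : Monotone g1 := fun a b hab => hSY1_anti (sub_le_sub_left (hδπ hab) t)
  have hg2_mono : Monotone g2 := fun a b hab => hSY2_anti (sub_le_sub_left (hδπ hab) t)
  have hg2_nonneg : ∀ u, 0 ≤ g2 u := fun u => hSY2_nonneg _
  -- rewrite the integrals in terms of g1, g2
  have hrw1 : (∫ u in (0:ℝ)..t, SY1 (t - (u - ω u)) * fX1 u) =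
      ∫ u in (0:ℝ)..t, g1 u * fX1 u := by
    refine intervalIntegral.integral_congr (fun u hu => ?_)
    rw [Set.uIcc_of_le ht] at hu
    rw [hg1def]; simp only [hπ_id u hu]
  have hrw2 : (∫ u in (0:ℝ)..t, SY2 (t - (u - ω u)) * fX2 u) =
      ∫ u in (0:ℝ)..t, g2 u * fX2 u := by
    refine intervalIntegral.integral_congr (fun u hu => ?_)
    rw [Set.uIcc_of_le ht] at hu
    rw [hg2def]; simp only [hπ_id u hu]
  rw [hrw1, hrw2]
  have hcmp : (∫ u in (0:ℝ)..t, g1 u * fX1 u) ≤ ∫ u in (0:ℝ)..t, g2 u * fX1 u := by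
    refine intervalIntegral.integral_mono_on ht (aux_ii hg1_mono hf1_cont 0 t)
      (aux_ii hg2_mono hf1_cont 0 t) (fun u hu => ?_)
    exact mul_le_mul_of_nonneg_right (hstY _) (hf1_nonneg u)
  have hcore : (1 - SX2 t) * (∫ u in (0:ℝ)..t, g2 u * fX1 u) ≤
      (1 - SX1 t) * ∫ u in (0:ℝ)..t, g2 u * fX2 u := by
    refine core_mono (fun u => 1 - SX1 u) (fun u => 1 - SX2 u) fX1 fX2 g2 t ht
      hf1_cont hf2_cont (fun u => ?_) (fun u => ?_) hg2_mono hg2_nonneg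
      (fun s hs0 hst => ?_)
    · simpa using (hd1 u).const_sub 1
    · simpa using (hd2 u).const_sub 1
    · have h := hrhrX s t hst
      show (1 - SX1 t) * (1 - SX2 s) ≤ (1 - SX2 t) * (1 - SX1 s)
      rw [mul_comm]; exact h
  have hF2t : (0:ℝ) ≤ 1 - SX2 t := by linarith [(hSX2_bd t).2]
  have hchain : (1 - SX2 t) * (∫ u in (0:ℝ)..t, g1 u * fX1 u) ≤
      (1 - SX1 t) * ∫ u in (0:ℝ)..t, g2 u * fX2 u :=
    le_trans (mul_le_mul_of_nonneg_left hcmp hF2t) hcore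
  have hFH := hFH_nonneg t
  nlinarith [hchain, hFH]
end

section
/- Under a common model function with δ(u) = u - ω(u) increasing and ω = γ, if either (i) X₁ ≤_lr X₂ and Y₁ ≤_rhr Y₂, or (ii) X₁ ≥_lr X₂ and Y₁ ≥_rhr Y₂, then Q₁^p ≤_st Q₂^p, where Q₁^p = max{X₁⊛Y₂, X₂⊛Y₁, X₃,...,Xₙ} and Q₂^p = max{X₁⊛Y₁, X₂⊛Y₂, X₃,...,Xₙ}, with F_{X_i⊛Y_j}(t) = ∫_0^t F_{Y_j}(t-δ(u)) dF_{X_i}(u). -/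
open MeasureTheory

/-- Key Chebyshev-type double-integral inequality. -/
lemma key_ineq (S : Set ℝ) (hS : MeasurableSet S) (a b p q : ℝ → ℝ)
    (hap : IntegrableOn (fun u => a u * p u) S)
    (hbp : IntegrableOn (fun u => b u * p u) S)
    (haq : IntegrableOn (fun u => a u * q u) S)
    (hbq : IntegrableOn (fun u => b u * q u) S)
    (hpt : ∀ u ∈ S, ∀ v ∈ S,
      0 ≤ (b u * a v - a u * b v) * (p u * q v - p v * q u)) :
    (∫ u in S, a u * p u) * (∫ u in S, b u * q u) ≤
    (∫ u in S, b u * p u) * (∫ u in S, a u * q u) := by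
  set A1 := ∫ u in S, a u * p u with hA1
  set B1 := ∫ u in S, b u * p u with hB1
  set A2 := ∫ u in S, a u * q u with hA2
  set B2 := ∫ u in S, b u * q u with hB2
  have i1 : ∀ u : ℝ, Integrable (fun v => (b u * p u) * (a v * q v)
      - (a u * p u) * (b v * q v)) (volume.restrict S) :=
    fun u => (haq.const_mul _).sub (hbq.const_mul _)
  have i2 : ∀ u : ℝ, Integrable (fun v => (a u * q u) * (b v * p v)
      - (b u * q u) * (a v * p v)) (volume.restrict S) :=
    fun u => (hbp.const_mul _).sub (hap.const_mul _)
  have hinner : ∀ u, (∫ v in S, ((b u * p u) * (a v * q v) - (a u * p u) * (b v * q v)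
      + ((a u * q u) * (b v * p v) - (b u * q u) * (a v * p v))))
      = (b u * p u) * A2 - (a u * p u) * B2 + ((a u * q u) * B1 - (b u * q u) * A1) := by
    intro u
    rw [integral_add (i1 u) (i2 u),
      integral_sub (haq.const_mul _) (hbq.const_mul _),
      integral_sub (hbp.const_mul _) (hap.const_mul _),
      integral_const_mul, integral_const_mul, integral_const_mul, integral_const_mul]
  have j1 : Integrable (fun u => (b u * p u) * A2 - (a u * p u) * B2)
      (volume.restrict S) := (hbp.mul_const _).sub (hap.mul_const _)
  have j2 : Integrable (fun u => (a u * q u) * B1 - (b u * q u) * A1)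
      (volume.restrict S) := (haq.mul_const _).sub (hbq.mul_const _)
  have houter : (∫ u in S, ((b u * p u) * A2 - (a u * p u) * B2
      + ((a u * q u) * B1 - (b u * q u) * A1)))
      = B1 * A2 - A1 * B2 + (A2 * B1 - B2 * A1) := by
    rw [integral_add j1 j2,
      integral_sub (hbp.mul_const _) (hap.mul_const _),
      integral_sub (haq.mul_const _) (hbq.mul_const _),
      integral_mul_const, integral_mul_const, integral_mul_const, integral_mul_const]
  have hnn : 0 ≤ (∫ u in S, ((b u * p u) * A2 - (a u * p u) * B2
      + ((a u * q u) * B1 - (b u * q u) * A1))) := by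
    refine integral_nonneg_of_ae ?_
    filter_upwards [ae_restrict_mem hS] with u hu
    rw [← hinner u]
    refine integral_nonneg_of_ae ?_
    filter_upwards [ae_restrict_mem hS] with v hv
    have h := hpt u hu v hv
    have he : (b u * p u) * (a v * q v) - (a u * p u) * (b v * q v)
        + ((a u * q u) * (b v * p v) - (b u * q u) * (a v * p v))
        = (b u * a v - a u * b v) * (p u * q v - p v * q u) := by ring
    rw [he]; exact h
  rw [houter] at hnn
  linarith

theorem model_III_parallel_st
    (FY1 FY2 FH fX1 fX2 : ℝ → ℝ) (γ ω : ℝ → ℝ)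
    -- densities of X₁, X₂
    (hf1_nonneg : ∀ u, 0 ≤ fX1 u) (hf2_nonneg : ∀ u, 0 ≤ fX2 u)
    (hf1_cont : Continuous fX1) (hf2_cont : Continuous fX2)
    -- distribution functions of Y₁, Y₂ and of H₂
    (hFY1_mono : Monotone FY1) (hFY2_mono : Monotone FY2)
    (hFY1_nonneg : ∀ u, 0 ≤ FY1 u) (hFY2_nonneg : ∀ u, 0 ≤ FY2 u)
    (hFH_nonneg : ∀ u, 0 ≤ FH u)
    -- common model functions: increasing, 0 ≤ ω(u) = γ(u) ≤ u, δ increasing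
    (hγ_mono : MonotoneOn γ (Set.Ici 0)) (hω_mono : MonotoneOn ω (Set.Ici 0))
    (hω_bd : ∀ u ≥ 0, 0 ≤ ω u ∧ ω u ≤ u) (hωγ : ∀ u ≥ 0, ω u = γ u)
    (hδ_mono : MonotoneOn (fun u => u - ω u) (Set.Ici 0))
    -- (i) X₁ ≤_lr X₂ and Y₁ ≤_rhr Y₂, or (ii) X₁ ≥_lr X₂ and Y₁ ≥_rhr Y₂
    (hcase :
      ((∀ s t : ℝ, s ≤ t → fX2 s * fX1 t ≤ fX2 t * fX1 s) ∧
       (∀ s t : ℝ, s ≤ t → FY2 s * FY1 t ≤ FY2 t * FY1 s)) ∨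
      ((∀ s t : ℝ, s ≤ t → fX1 s * fX2 t ≤ fX1 t * fX2 s) ∧
       (∀ s t : ℝ, s ≤ t → FY1 s * FY2 t ≤ FY1 t * FY2 s))) :
    -- conclusion: Q₁ᵖ ≤_st Q₂ᵖ, i.e. F_{Q₂ᵖ} ≤ F_{Q₁ᵖ} pointwise
    ∀ t ≥ 0,
      FH t * (∫ u in (0:ℝ)..t, FY1 (t - (u - ω u)) * fX1 u) *
             (∫ u in (0:ℝ)..t, FY2 (t - (u - ω u)) * fX2 u) ≤
      FH t * (∫ u in (0:ℝ)..t, FY2 (t - (u - ω u)) * fX1 u) *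
             (∫ u in (0:ℝ)..t, FY1 (t - (u - ω u)) * fX2 u) := by
  intro t ht
  have hδ0 : ∀ u : ℝ, 0 ≤ u → 0 ≤ u - ω u := fun u hu => sub_nonneg.2 (hω_bd u hu).2
  -- generic integrability
  have mk : ∀ (F g : ℝ → ℝ), Monotone F → (∀ x, 0 ≤ F x) → Continuous g → (∀ x, 0 ≤ g x) →
      IntegrableOn (fun u => F (t - (u - ω u)) * g u) (Set.Ioc 0 t) := by
    intro F g hF hFnn hg hgnn
    have hanti : AntitoneOn (fun u => F (t - (u - ω u))) (Set.Ioc 0 t) := by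
      intro x hx y hy hxy
      have hxy' : x - ω x ≤ y - ω y :=
        hδ_mono (Set.mem_Ici.2 hx.1.le) (Set.mem_Ici.2 hy.1.le) hxy
      exact hF (by linarith)
    have ham : AEMeasurable (fun u => F (t - (u - ω u)))
        (volume.restrict (Set.Ioc 0 t)) :=
      aemeasurable_restrict_of_antitoneOn measurableSet_Ioc hanti
    have hgint : IntegrableOn g (Set.Ioc 0 t) := hg.integrableOn_Ioc
    refine Integrable.mono' (hgint.const_mul (F t))
      ((ham.mul hg.aemeasurable).aestronglyMeasurable) ?_
    filter_upwards [ae_restrict_mem measurableSet_Ioc] with u hu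
    rw [Real.norm_eq_abs, abs_of_nonneg (mul_nonneg (hFnn _) (hgnn _))]
    exact mul_le_mul_of_nonneg_right (hF (sub_le_self t (hδ0 u hu.1.le))) (hgnn u)
  have Iap := mk FY1 fX1 hFY1_mono hFY1_nonneg hf1_cont hf1_nonneg
  have Ibp := mk FY2 fX1 hFY2_mono hFY2_nonneg hf1_cont hf1_nonneg
  have Iaq := mk FY1 fX2 hFY1_mono hFY1_nonneg hf2_cont hf2_nonneg
  have Ibq := mk FY2 fX2 hFY2_mono hFY2_nonneg hf2_cont hf2_nonneg
  -- pointwise sign condition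
  have hG : ∀ u : ℝ, 0 ≤ u → ∀ v : ℝ, 0 ≤ v → u ≤ v →
      0 ≤ (FY2 (t - (u - ω u)) * FY1 (t - (v - ω v))
            - FY1 (t - (u - ω u)) * FY2 (t - (v - ω v)))
          * (fX1 u * fX2 v - fX1 v * fX2 u) := by
    intro u hu v hv huv
    have hδuv : u - ω u ≤ v - ω v :=
      hδ_mono (Set.mem_Ici.2 hu) (Set.mem_Ici.2 hv) huv
    have h1 : t - (v - ω v) ≤ t - (u - ω u) := by linarith
    rcases hcase with ⟨hX, hY⟩ | ⟨hX, hY⟩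
    · have hy := hY _ _ h1
      have hx := hX u v huv
      exact mul_nonneg (by linarith) (by linarith)
    · have hy := hY _ _ h1
      have hx := hX u v huv
      nlinarith [mul_nonneg (sub_nonneg.2 hy) (sub_nonneg.2 hx)]
  have hpt : ∀ u ∈ Set.Ioc (0:ℝ) t, ∀ v ∈ Set.Ioc (0:ℝ) t,
      0 ≤ (FY2 (t - (u - ω u)) * FY1 (t - (v - ω v))
            - FY1 (t - (u - ω u)) * FY2 (t - (v - ω v)))
          * (fX1 u * fX2 v - fX1 v * fX2 u) := by
    intro u hu v hv
    rcases le_total u v with h | h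
    · exact hG u hu.1.le v hv.1.le h
    · have := hG v hv.1.le u hu.1.le h
      nlinarith [this]
  have main := key_ineq (Set.Ioc 0 t) measurableSet_Ioc
    (fun u => FY1 (t - (u - ω u))) (fun u => FY2 (t - (u - ω u))) fX1 fX2
    Iap Ibp Iaq Ibq hpt
  simp only [intervalIntegral.integral_of_le ht]
  nlinarith [mul_nonneg (hFH_nonneg t) (sub_nonneg.2 main)]
end

section
/- If Y₂ ≤_hr Y₁ and Y₂ has a log-concave (log-convex) survival function, and ω₁(u) ≤ ω₂(u) (resp. ω₁(u) ≥ ω₂(u)) for all u ≥ 0, then for all 0 ≤ u ≤ t: F̄_{Y₁}(t - δ₁(u)) / F̄_{Y₁}(ω₁(u)) ≥ F̄_{Y₂}(t - δ₂(u)) / F̄_{Y₂}(ω₂(u)), where δ_i(u) = u - ω_i(u). -/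
lemma concave_shift_ineq {g : ℝ → ℝ} (hg : ConcaveOn ℝ (Set.Ici 0) g) {a b s : ℝ}
    (ha : 0 ≤ a) (hab : a ≤ b) (hs : 0 ≤ s) :
    g a + g (b + s) ≤ g (a + s) + g b := by
  rcases eq_or_lt_of_le (show a ≤ b + s by linarith) with h | h
  · have hs0 : s = 0 := by linarith
    have hab' : a = b := by linarith
    simp [hs0, hab']
  · have hd0 : (0:ℝ) < b + s - a := by linarith
    set lam := s / (b + s - a) with hlam_def
    set mu := (b - a) / (b + s - a) with hmu_def
    have hlam : 0 ≤ lam := div_nonneg hs hd0.le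
    have hmu : 0 ≤ mu := div_nonneg (by linarith) hd0.le
    have hsum : mu + lam = 1 := by
      rw [hmu_def, hlam_def, ← add_div, div_eq_iff hd0.ne']; ring
    have hbs : (0:ℝ) ≤ b + s := by linarith
    have h1 := hg.2 (Set.mem_Ici.2 ha) (Set.mem_Ici.2 hbs) hmu hlam hsum
    have h2 := hg.2 (Set.mem_Ici.2 ha) (Set.mem_Ici.2 hbs) hlam hmu
      (by linarith : lam + mu = 1)
    have e1 : mu * a + lam * (b + s) = a + s := by
      rw [hmu_def, hlam_def, div_mul_eq_mul_div, div_mul_eq_mul_div, ← add_div,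
        div_eq_iff hd0.ne']; ring
    have e2 : lam * a + mu * (b + s) = b := by
      rw [hmu_def, hlam_def, div_mul_eq_mul_div, div_mul_eq_mul_div, ← add_div,
        div_eq_iff hd0.ne']; ring
    simp only [smul_eq_mul] at h1 h2
    rw [e1] at h1
    rw [e2] at h2
    have hx : g a + g (b + s) = (mu + lam) * (g a + g (b + s)) := by rw [hsum]; ring
    linarith

/- STATEMENT 16: If Y₂ ≤_hr Y₁ and Y₂ has a log-concave (resp. log-convex) survival
function, and ω₁(u) ≤ ω₂(u) (resp. ω₁(u) ≥ ω₂(u)) for all u ≥ 0, then for all 0 ≤ u ≤ t: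
F̄_{Y₁}(t - δ₁(u)) / F̄_{Y₁}(ω₁(u)) ≥ F̄_{Y₂}(t - δ₂(u)) / F̄_{Y₂}(ω₂(u)),
where δᵢ(u) = u - ωᵢ(u). -/
theorem hr_logconcave_conditional_survival_compare
    (SY1 SY2 : ℝ → ℝ) (ω1 ω2 : ℝ → ℝ)
    (hSY1_pos : ∀ u ≥ 0, 0 < SY1 u) (hSY2_pos : ∀ u ≥ 0, 0 < SY2 u)
    (hSY1_anti : Antitone SY1) (hSY2_anti : Antitone SY2)
    (hω1_mono : MonotoneOn ω1 (Set.Ici 0)) (hω2_mono : MonotoneOn ω2 (Set.Ici 0))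
    (hω1_bd : ∀ u ≥ 0, 0 ≤ ω1 u ∧ ω1 u ≤ u) (hω2_bd : ∀ u ≥ 0, 0 ≤ ω2 u ∧ ω2 u ≤ u)
    -- Y₂ ≤_hr Y₁ : F̄_{Y₁}/F̄_{Y₂} increasing
    (hhr : ∀ s t : ℝ, s ≤ t → SY1 s * SY2 t ≤ SY1 t * SY2 s)
    -- Y₂ has a log-concave (resp. log-convex) survival function, with ω₁ ≤ ω₂ (resp. ω₁ ≥ ω₂)
    (hcase :
      (ConcaveOn ℝ (Set.Ici 0) (fun u => Real.log (SY2 u)) ∧ ∀ u ≥ 0, ω1 u ≤ ω2 u) ∨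
      (ConvexOn ℝ (Set.Ici 0) (fun u => Real.log (SY2 u)) ∧ ∀ u ≥ 0, ω2 u ≤ ω1 u)) :
    ∀ u t : ℝ, 0 ≤ u → u ≤ t →
      SY2 (t - (u - ω2 u)) / SY2 (ω2 u) ≤ SY1 (t - (u - ω1 u)) / SY1 (ω1 u) := by
  intro u t hu hut
  obtain ⟨hω1_0, hω1_u⟩ := hω1_bd u hu
  obtain ⟨hω2_0, hω2_u⟩ := hω2_bd u hu
  have hs : (0:ℝ) ≤ t - u := by linarith
  have e1 : t - (u - ω1 u) = ω1 u + (t - u) := by ring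
  have e2 : t - (u - ω2 u) = ω2 u + (t - u) := by ring
  rw [e1, e2]
  have hp1 : 0 < SY1 (ω1 u) := hSY1_pos _ hω1_0
  have hp2 : 0 < SY2 (ω2 u) := hSY2_pos _ hω2_0
  have hp1' : 0 < SY2 (ω1 u) := hSY2_pos _ hω1_0
  have hp2' : 0 < SY2 (ω2 u + (t - u)) := hSY2_pos _ (by linarith)
  have hp3 : 0 < SY2 (ω1 u + (t - u)) := hSY2_pos _ (by linarith)
  -- key log inequality : SY2 (ω1 u) * SY2 (ω2 u + (t-u)) ≤ SY2 (ω1 u + (t-u)) * SY2 (ω2 u)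
  have key : SY2 (ω1 u) * SY2 (ω2 u + (t - u)) ≤ SY2 (ω1 u + (t - u)) * SY2 (ω2 u) := by
    have hlog : Real.log (SY2 (ω1 u)) + Real.log (SY2 (ω2 u + (t - u))) ≤
        Real.log (SY2 (ω1 u + (t - u))) + Real.log (SY2 (ω2 u)) := by
      rcases hcase with ⟨hcc, hle⟩ | ⟨hcv, hle⟩
      · have := concave_shift_ineq hcc hω1_0 (hle u hu) hs
        simpa using this
      · have := (concave_shift_ineq hcv.neg hω2_0 (hle u hu) hs)
        simp only [Pi.neg_apply] at this
        linarith
    have := Real.exp_le_exp.2 hlog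
    rwa [Real.exp_add, Real.exp_add, Real.exp_log hp1', Real.exp_log hp2',
      Real.exp_log hp3, Real.exp_log hp2] at this
  have step1 : SY2 (ω2 u + (t - u)) / SY2 (ω2 u) ≤ SY2 (ω1 u + (t - u)) / SY2 (ω1 u) := by
    rw [div_le_div_iff₀ hp2 hp1']
    linarith [key]
  have step2 : SY2 (ω1 u + (t - u)) / SY2 (ω1 u) ≤ SY1 (ω1 u + (t - u)) / SY1 (ω1 u) := by
    rw [div_le_div_iff₀ hp1' hp1]
    have := hhr (ω1 u) (ω1 u + (t - u)) (by linarith)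
    linarith
  linarith
end

section
/- Let X₁,...,Xₙ and Y₁, Y₂ be independent exponential random variables with rates λ₁ ≥ λ₂ (for X₁, X₂) and 0 < μ₁ ≤ μ₂ (for Y₁, Y₂), and take γ_j(u) = a_j u, ω_j(u) = b_j u with 0 < a₁ ≤ a₂ ≤ b₁ ≤ b₂ ≤ 1. Then X₁ ≤_hr X₂, Y₂ ≤_hr Y₁, γ₁ ≤ γ₂, ω₁ ≤ ω₂, and Y₁, Y₂ have log-concave survival functions; consequently V₂^s ≤_st V₁^s where V₁^s = min{X₁⊛Y₁, X₂, X₃,...,Xₙ} and V₂^s = min{X₁, X₂⊛Y₂, X₃,...,Xₙ}. -/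
open Real

lemma linear_concaveOn (m : ℝ) : ConcaveOn ℝ (Set.Ici (0:ℝ)) (fun t => m * t) := by
  refine ⟨convex_Ici 0, ?_⟩
  intro x _ y _ p q _ _ _
  simp only [smul_eq_mul]
  exact le_of_eq (by ring)

theorem exponential_standby_series_example
    (lam1 lam2 mu1 mu2 a1 a2 b1 b2 c : ℝ)
    (hlam2 : 0 < lam2) (hlam : lam2 ≤ lam1)
    (hmu1 : 0 < mu1) (hmu : mu1 ≤ mu2)
    (ha1 : 0 < a1) (ha12 : a1 ≤ a2) (ha2b1 : a2 ≤ b1) (hb12 : b1 ≤ b2) (hb2 : b2 ≤ 1)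
    (hc : 0 ≤ c) :
    -- X₁ ≤_hr X₂
    (∀ s t : ℝ, s ≤ t →
        exp (-lam2 * s) * exp (-lam1 * t) ≤ exp (-lam2 * t) * exp (-lam1 * s)) ∧
    -- Y₂ ≤_hr Y₁
    (∀ s t : ℝ, s ≤ t →
        exp (-mu1 * s) * exp (-mu2 * t) ≤ exp (-mu1 * t) * exp (-mu2 * s)) ∧
    -- γ₁ ≤ γ₂ and ω₁ ≤ ω₂
    (∀ u ≥ (0:ℝ), a1 * u ≤ a2 * u) ∧ (∀ u ≥ (0:ℝ), b1 * u ≤ b2 * u) ∧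
    -- Y₁, Y₂ have log-concave survival functions
    ConcaveOn ℝ (Set.Ici 0) (fun t => Real.log (exp (-mu1 * t))) ∧
    ConcaveOn ℝ (Set.Ici 0) (fun t => Real.log (exp (-mu2 * t))) ∧
    -- hence V₂ˢ ≤_st V₁ˢ
    (∀ t ≥ (0:ℝ),
      exp (-lam1 * t) *
        (exp (-lam2 * t) + ∫ u in (0:ℝ)..t,
          (exp (-mu2 * (t - (u - b2 * u))) / exp (-mu2 * (b2 * u))) *
            exp (-mu2 * (a2 * u)) * (lam2 * exp (-lam2 * u))) * exp (-c * t) ≤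
      (exp (-lam1 * t) + ∫ u in (0:ℝ)..t,
          (exp (-mu1 * (t - (u - b1 * u))) / exp (-mu1 * (b1 * u))) *
            exp (-mu1 * (a1 * u)) * (lam1 * exp (-lam1 * u))) *
        exp (-lam2 * t) * exp (-c * t)) := by
  refine ⟨?_, ?_, ?_, ?_, ?_, ?_, ?_⟩
  · intro s t hst
    rw [← exp_add, ← exp_add, exp_le_exp]
    nlinarith [mul_le_mul_of_nonneg_left hst (sub_nonneg.2 hlam)]
  · intro s t hst
    rw [← exp_add, ← exp_add, exp_le_exp]
    nlinarith [mul_le_mul_of_nonneg_left hst (sub_nonneg.2 hmu)]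
  · intro u hu; exact mul_le_mul_of_nonneg_right ha12 hu
  · intro u hu; exact mul_le_mul_of_nonneg_right hb12 hu
  · simpa [Real.log_exp] using linear_concaveOn (-mu1)
  · simpa [Real.log_exp] using linear_concaveOn (-mu2)
  · intro t ht
    have key : exp (-lam1 * t) *
        (exp (-lam2 * t) + ∫ u in (0:ℝ)..t,
          (exp (-mu2 * (t - (u - b2 * u))) / exp (-mu2 * (b2 * u))) *
            exp (-mu2 * (a2 * u)) * (lam2 * exp (-lam2 * u))) ≤
        (exp (-lam1 * t) + ∫ u in (0:ℝ)..t,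
          (exp (-mu1 * (t - (u - b1 * u))) / exp (-mu1 * (b1 * u))) *
            exp (-mu1 * (a1 * u)) * (lam1 * exp (-lam1 * u))) * exp (-lam2 * t) := by
      rw [mul_add, add_mul]
      refine add_le_add le_rfl ?_
      rw [← intervalIntegral.integral_const_mul, ← intervalIntegral.integral_mul_const]
      have cont1 : Continuous (fun u : ℝ =>
          ((exp (-mu1 * (t - (u - b1 * u))) / exp (-mu1 * (b1 * u))) *
            exp (-mu1 * (a1 * u)) * (lam1 * exp (-lam1 * u))) * exp (-lam2 * t)) := by
        fun_prop (disch := intros; positivity)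
      have cont2 : Continuous (fun u : ℝ =>
          exp (-lam1 * t) * ((exp (-mu2 * (t - (u - b2 * u))) / exp (-mu2 * (b2 * u))) *
            exp (-mu2 * (a2 * u)) * (lam2 * exp (-lam2 * u)))) := by
        fun_prop (disch := intros; positivity)
      refine intervalIntegral.integral_mono_on ht (cont2.intervalIntegrable 0 t)
        (cont1.intervalIntegrable 0 t) ?_
      intro u hu
      obtain ⟨hu0, hut⟩ := hu
      rw [div_eq_mul_inv, div_eq_mul_inv, ← exp_neg, ← exp_neg]
      have lhs_eq : exp (-lam1 * t) * (exp (-mu2 * (t - (u - b2 * u))) *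
          exp (-(-mu2 * (b2 * u))) * exp (-mu2 * (a2 * u)) * (lam2 * exp (-lam2 * u))) =
          lam2 * exp (-lam1 * t + -mu2 * (t - (u - b2 * u)) + -(-mu2 * (b2 * u)) +
            -mu2 * (a2 * u) + -lam2 * u) := by
        rw [exp_add, exp_add, exp_add, exp_add]; ring
      have rhs_eq : exp (-mu1 * (t - (u - b1 * u))) * exp (-(-mu1 * (b1 * u))) *
          exp (-mu1 * (a1 * u)) * (lam1 * exp (-lam1 * u)) * exp (-lam2 * t) =
          lam1 * exp (-mu1 * (t - (u - b1 * u)) + -(-mu1 * (b1 * u)) +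
            -mu1 * (a1 * u) + -lam1 * u + -lam2 * t) := by
        rw [exp_add, exp_add, exp_add, exp_add]; ring
      rw [lhs_eq, rhs_eq]
      have hexp : -lam1 * t + -mu2 * (t - (u - b2 * u)) + -(-mu2 * (b2 * u)) +
            -mu2 * (a2 * u) + -lam2 * u ≤
          -mu1 * (t - (u - b1 * u)) + -(-mu1 * (b1 * u)) +
            -mu1 * (a1 * u) + -lam1 * u + -lam2 * t := by
        nlinarith [mul_le_mul_of_nonneg_left (sub_nonneg.2 hut) (sub_nonneg.2 hmu),
          mul_le_mul_of_nonneg_left (sub_nonneg.2 hut) (sub_nonneg.2 hlam),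
          mul_le_mul_of_nonneg_right
            (mul_le_mul hmu ha12 ha1.le (le_of_lt (hmu1.trans_le hmu))) hu0]
      exact mul_le_mul hlam (exp_le_exp.2 hexp) (exp_pos _).le (hlam2.le.trans hlam)
    exact mul_le_mul_of_nonneg_right key (exp_pos _).le
end
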